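/- arXiv:1010.0524 — 8 statements merged into one kernel-verified Lean document; each statement's English description precedes it below -/
import Mathlib

section
/- If D is mixed Poisson(X) for a nonnegative random variable X (so its generating function is f(s) = E[e^{-X(1-s)}]), and there exist s* ∈ (0,1) and λ > 0 with f(s*) = e^{-λ(1-s*)}, then f(s) ≤ e^{-λ(1-s)} for all s ∈ [s*, 1]. -/
open MeasureTheory ProbabilityTheory Real

theorem mixedPoisson_pgf_below_exponential
    {Ω : Type*} [MeasureSpace Ω] [IsProbabilityMeasure (ℙ : Measure Ω)]
    (X : Ω → ℝ) (hXmeas : Measurable X) (hXpos : ∀ ω, 0 ≤ X ω)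
    (hXint : Integrable X)
    (f : ℝ → ℝ) (hf : ∀ s, f s = ∫ ω, Real.exp (-(X ω) * (1 - s)))
    (sstar lam : ℝ) (hs : sstar ∈ Set.Ioo (0 : ℝ) 1) (hlam : 0 < lam)
    (hcross : f sstar = Real.exp (-lam * (1 - sstar))) :
    ∀ s ∈ Set.Icc sstar 1, f s ≤ Real.exp (-lam * (1 - s)) := by
  obtain ⟨hs0, hs1⟩ := hs
  intro s ⟨hss, hsle1⟩
  have hds : 0 < 1 - sstar := by linarith
  set θ : ℝ := (1 - s) / (1 - sstar) with hθdef
  have hθ0 : 0 ≤ θ := div_nonneg (by linarith) hds.le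
  have hθ1 : θ ≤ 1 := (div_le_one hds).2 (by linarith)
  have hmul : (1 - sstar) * θ = 1 - s := by
    rw [hθdef]; field_simp [hds.ne']
  -- pointwise rewriting: exp(-X(1-s)) = (exp(-X(1-s*)))^θ
  have hpt : ∀ ω, Real.exp (-(X ω) * (1 - s))
      = (Real.exp (-(X ω) * (1 - sstar))) ^ θ := by
    intro ω
    rw [Real.rpow_def_of_pos (Real.exp_pos _), Real.log_exp]
    congr 1
    rw [mul_assoc, hmul]
  -- integrability facts
  have hYmeas : Measurable fun ω => Real.exp (-(X ω) * (1 - sstar)) :=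
    (hXmeas.neg.mul_const _).exp
  have hYle : ∀ ω, Real.exp (-(X ω) * (1 - sstar)) ≤ 1 := fun ω => by
    have := hXpos ω
    exact Real.exp_le_one_iff.2 (by nlinarith)
  have hYint : Integrable fun ω => Real.exp (-(X ω) * (1 - sstar)) := by
    refine (integrable_const (1 : ℝ)).mono' hYmeas.aestronglyMeasurable ?_
    filter_upwards with ω
    rw [Real.norm_eq_abs, abs_of_pos (Real.exp_pos _)]
    exact hYle ω
  have hYθint : Integrable fun ω => (Real.exp (-(X ω) * (1 - sstar))) ^ θ := by
    refine (integrable_const (1 : ℝ)).mono'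
      (((continuous_id.rpow_const fun x => Or.inr hθ0).measurable.comp hYmeas).aestronglyMeasurable) ?_
    filter_upwards with ω
    rw [Real.norm_eq_abs, abs_of_nonneg (Real.rpow_nonneg (Real.exp_pos _).le _)]
    calc (Real.exp (-(X ω) * (1 - sstar))) ^ θ ≤ 1 ^ θ :=
          Real.rpow_le_rpow (Real.exp_pos _).le (hYle ω) hθ0
      _ = 1 := Real.one_rpow θ
  -- Jensen
  have hconc : ConcaveOn ℝ (Set.Ici (0:ℝ)) fun x : ℝ => x ^ θ :=
    Real.concaveOn_rpow hθ0 hθ1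
  have hcont : ContinuousOn (fun x : ℝ => x ^ θ) (Set.Ici 0) :=
    (continuous_id.rpow_const (fun x => Or.inr hθ0)).continuousOn
  have hjensen := hconc.le_map_integral hcont isClosed_Ici
    (Filter.Eventually.of_forall fun ω => Set.mem_Ici.2 (Real.exp_pos _).le)
    hYint hYθint
  have hint_eq : (∫ ω, Real.exp (-(X ω) * (1 - sstar))) = Real.exp (-lam * (1 - sstar)) := by
    rw [← hf sstar]; exact hcross
  calc f s = ∫ ω, (Real.exp (-(X ω) * (1 - sstar))) ^ θ := by
        rw [hf s]; exact integral_congr_ae (Filter.Eventually.of_forall hpt)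
    _ ≤ (∫ ω, Real.exp (-(X ω) * (1 - sstar))) ^ θ := hjensen
    _ = Real.exp (-lam * (1 - s)) := by
        rw [hint_eq, Real.rpow_def_of_pos (Real.exp_pos _), Real.log_exp]
        congr 1
        rw [mul_assoc, hmul]
end

section
/- Suppose X is a nonnegative random variable with f(s) = E[e^{-X(1-s)}] and derivative at s* ∈ (0,1) satisfying f'(s*) ≥ λ e^{-λ(1-s*)} and f(s*) = e^{-λ(1-s*)}. Then for every positive integer k, the k-th derivative satisfies f^{(k)}(s*) = E[X^k e^{-X(1-s*)}] ≥ λ^k e^{-λ(1-s*)}. -/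
open MeasureTheory ProbabilityTheory Real

private lemma mp_aux_integrable {Ω : Type*} [MeasureSpace Ω]
    (X : Ω → ℝ) (hXmeas : Measurable X) (hXpos : ∀ ω, 0 ≤ X ω)
    (hXmom : ∀ k : ℕ, Integrable (fun ω => X ω ^ k))
    (k : ℕ) (s : ℝ) (hs : s ≤ 1) :
    Integrable (fun ω => X ω ^ k * Real.exp (-(X ω) * (1 - s))) := by
  refine (hXmom k).mono
    (((hXmeas.pow_const k).mul ((hXmeas.neg.mul_const (1 - s)).exp)).aestronglyMeasurable)
    (Filter.Eventually.of_forall fun ω => ?_)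
  have h1 : Real.exp (-(X ω) * (1 - s)) ≤ 1 := by
    rw [Real.exp_le_one_iff]
    have := hXpos ω
    nlinarith
  have h2 : (0:ℝ) ≤ X ω ^ k := pow_nonneg (hXpos ω) k
  rw [Real.norm_eq_abs, Real.norm_eq_abs, abs_of_nonneg (mul_nonneg h2 (Real.exp_pos _).le),
    abs_of_nonneg h2]
  nlinarith [Real.exp_pos (-(X ω) * (1 - s))]

private lemma mp_aux_hasDerivAt {Ω : Type*} [MeasureSpace Ω] [IsProbabilityMeasure (ℙ : Measure Ω)]
    (X : Ω → ℝ) (hXmeas : Measurable X) (hXpos : ∀ ω, 0 ≤ X ω)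
    (hXmom : ∀ k : ℕ, Integrable (fun ω => X ω ^ k))
    (k : ℕ) (s₀ : ℝ) (hs₀ : s₀ < 1) :
    HasDerivAt (fun s => ∫ ω, X ω ^ k * Real.exp (-(X ω) * (1 - s)))
      (∫ ω, X ω ^ (k + 1) * Real.exp (-(X ω) * (1 - s₀))) s₀ := by
  have hε : 0 < (1 - s₀) / 2 := by linarith
  refine (hasDerivAt_integral_of_dominated_loc_of_deriv_le (μ := ℙ)
    (F := fun s ω => X ω ^ k * Real.exp (-(X ω) * (1 - s)))
    (F' := fun s ω => X ω ^ (k + 1) * Real.exp (-(X ω) * (1 - s)))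
    (bound := fun ω => X ω ^ (k + 1)) (Metric.ball_mem_nhds s₀ hε) ?_ ?_ ?_ ?_ ?_ ?_).2
  · exact Filter.Eventually.of_forall fun s =>
      ((hXmeas.pow_const k).mul ((hXmeas.neg.mul_const (1 - s)).exp)).aestronglyMeasurable
  · exact mp_aux_integrable X hXmeas hXpos hXmom k s₀ hs₀.le
  · exact ((hXmeas.pow_const (k + 1)).mul
      ((hXmeas.neg.mul_const (1 - s₀)).exp)).aestronglyMeasurable
  · refine Filter.Eventually.of_forall fun ω s hsb => ?_
    have hs1 : s ≤ 1 := by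
      rw [Metric.mem_ball, Real.dist_eq, abs_lt] at hsb
      linarith [hsb.2]
    have h1 : Real.exp (-(X ω) * (1 - s)) ≤ 1 := by
      rw [Real.exp_le_one_iff]
      have := hXpos ω
      nlinarith
    have h2 : (0:ℝ) ≤ X ω ^ (k + 1) := pow_nonneg (hXpos ω) _
    rw [Real.norm_eq_abs, abs_of_nonneg (mul_nonneg h2 (Real.exp_pos _).le)]
    nlinarith [Real.exp_pos (-(X ω) * (1 - s))]
  · exact hXmom (k + 1)
  · refine Filter.Eventually.of_forall fun ω s _ => ?_
    have h1 : HasDerivAt (fun u : ℝ => -(X ω) * (1 - u)) (X ω) s := by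
      simpa using ((hasDerivAt_const s (1:ℝ)).sub (hasDerivAt_id s)).const_mul (-(X ω))
    have h3 := (h1.exp).const_mul (X ω ^ k)
    convert h3 using 1
    · rfl
    · ring

private lemma mp_aux_iter {Ω : Type*} [MeasureSpace Ω] [IsProbabilityMeasure (ℙ : Measure Ω)]
    (X : Ω → ℝ) (hXmeas : Measurable X) (hXpos : ∀ ω, 0 ≤ X ω)
    (hXmom : ∀ k : ℕ, Integrable (fun ω => X ω ^ k))
    (f : ℝ → ℝ) (hf : ∀ s, f s = ∫ ω, Real.exp (-(X ω) * (1 - s))) :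
    ∀ k : ℕ, ∀ s, s < 1 →
      iteratedDeriv k f s = ∫ ω, X ω ^ k * Real.exp (-(X ω) * (1 - s)) := by
  intro k
  induction k with
  | zero => intro s _; simp [iteratedDeriv_zero, hf s]
  | succ k ih =>
    intro s hslt
    rw [iteratedDeriv_succ]
    have heq : iteratedDeriv k f =ᶠ[nhds s]
        fun u => ∫ ω, X ω ^ k * Real.exp (-(X ω) * (1 - u)) := by
      filter_upwards [Iio_mem_nhds hslt] with u hu using ih u hu
    rw [heq.deriv_eq]
    exact (mp_aux_hasDerivAt X hXmeas hXpos hXmom k s hslt).deriv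

theorem mixedPoisson_iteratedDeriv_bound
    {Ω : Type*} [MeasureSpace Ω] [IsProbabilityMeasure (ℙ : Measure Ω)]
    (X : Ω → ℝ) (hXmeas : Measurable X) (hXpos : ∀ ω, 0 ≤ X ω)
    (hXmom : ∀ k : ℕ, Integrable (fun ω => X ω ^ k))
    (f : ℝ → ℝ) (hf : ∀ s, f s = ∫ ω, Real.exp (-(X ω) * (1 - s)))
    (sstar lam : ℝ) (hs : sstar ∈ Set.Ioo (0 : ℝ) 1) (hlam : 0 < lam)
    (hderiv : deriv f sstar ≥ lam * Real.exp (-lam * (1 - sstar)))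
    (hcross : f sstar = Real.exp (-lam * (1 - sstar))) :
    ∀ k : ℕ, 1 ≤ k →
      iteratedDeriv k f sstar = ∫ ω, (X ω) ^ k * Real.exp (-(X ω) * (1 - sstar)) ∧
      iteratedDeriv k f sstar ≥ lam ^ k * Real.exp (-lam * (1 - sstar)) := by
  intro k hk
  set b : Ω → ℝ := fun ω => Real.exp (-(X ω) * (1 - sstar)) with hb
  set c : ℝ := Real.exp (-lam * (1 - sstar)) with hcdef
  have hc : 0 < c := Real.exp_pos _
  have hbpos : ∀ ω, 0 < b ω := fun ω => Real.exp_pos _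
  have hble : ∀ ω, b ω ≤ 1 := by
    intro ω
    rw [hb, Real.exp_le_one_iff]
    have := hXpos ω
    nlinarith [hs.2]
  have hbmeas : Measurable b := (hXmeas.neg.mul_const (1 - sstar)).exp
  have hIterEq := mp_aux_iter X hXmeas hXpos hXmom f hf k sstar hs.2
  refine ⟨hIterEq, ?_⟩
  -- ∫ b = c
  have hfb : ∫ ω, b ω = c := by rw [← hcross, hf sstar]
  -- deriv f sstar = ∫ X * b
  have hd1 : deriv f sstar = ∫ ω, X ω * b ω := by
    have h := mp_aux_iter X hXmeas hXpos hXmom f hf 1 sstar hs.2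
    rw [iteratedDeriv_one] at h
    simp only [pow_one] at h
    exact h
  -- the tilted measure
  set d : Ω → NNReal := fun ω => Real.toNNReal (b ω / c) with hd
  have hd_meas : Measurable d := (hbmeas.div_const c).real_toNNReal
  set μ : Measure Ω := (volume : Measure Ω).withDensity (fun ω => (d ω : ENNReal)) with hμ
  have hcoe : ∀ ω, ((d ω : ℝ)) = b ω / c := fun ω =>
    Real.coe_toNNReal _ (div_nonneg (hbpos ω).le hc.le)
  have hInt : ∀ g : Ω → ℝ, ∫ ω, g ω ∂μ = ∫ ω, (b ω / c) * g ω := by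
    intro g
    rw [hμ, integral_withDensity_eq_integral_smul hd_meas]
    congr 1
    funext ω
    rw [NNReal.smul_def, smul_eq_mul, hcoe ω]
  -- integrability of (b/c) * X^m
  have hmono : ∀ m : ℕ, Integrable (fun ω => (b ω / c) * X ω ^ m) := by
    intro m
    refine ((hXmom m).const_mul (1 / c)).mono
      (((hbmeas.div_const c).mul (hXmeas.pow_const m)).aestronglyMeasurable)
      (Filter.Eventually.of_forall fun ω => ?_)
    have h2 : (0:ℝ) ≤ X ω ^ m := pow_nonneg (hXpos ω) m
    rw [Real.norm_eq_abs, Real.norm_eq_abs,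
      abs_of_nonneg (mul_nonneg (div_nonneg (hbpos ω).le hc.le) h2),
      abs_of_nonneg (mul_nonneg (by positivity) h2)]
    have hble' := hble ω
    have : b ω / c ≤ 1 / c := by gcongr
    nlinarith
  have hXμ : Integrable X μ := by
    rw [hμ, integrable_withDensity_iff_integrable_smul hd_meas]
    have := hmono 1
    simp only [pow_one] at this
    refine this.congr (Filter.Eventually.of_forall fun ω => ?_)
    show b ω / c * X ω = d ω • X ω
    rw [NNReal.smul_def, smul_eq_mul, hcoe ω]
  have hXkμ : Integrable (fun ω => X ω ^ k) μ := by
    rw [hμ, integrable_withDensity_iff_integrable_smul hd_meas]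
    refine (hmono k).congr (Filter.Eventually.of_forall fun ω => ?_)
    show b ω / c * X ω ^ k = d ω • X ω ^ k
    rw [NNReal.smul_def, smul_eq_mul, hcoe ω]
  have hμprob : IsProbabilityMeasure μ := by
    constructor
    rw [hμ, withDensity_apply _ MeasurableSet.univ, setLIntegral_univ]
    have hbci : Integrable (fun ω => b ω / c) := by
      have h0 := mp_aux_integrable X hXmeas hXpos hXmom 0 sstar hs.2.le
      simp only [pow_zero, one_mul] at h0
      exact h0.div_const c
    have h1 : ∫⁻ ω, (d ω : ENNReal) ∂ℙ = ENNReal.ofReal (∫ ω, b ω / c) := by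
      rw [ofReal_integral_eq_lintegral_ofReal hbci
        (Filter.Eventually.of_forall fun ω => div_nonneg (hbpos ω).le hc.le)]
      rfl
    rw [h1]
    have : ∫ ω, b ω / c = 1 := by rw [integral_div, hfb, div_self hc.ne']
    rw [this, ENNReal.ofReal_one]
  -- Jensen
  have hJ : (∫ ω, X ω ∂μ) ^ k ≤ ∫ ω, X ω ^ k ∂μ := by
    have h := (convexOn_pow (𝕜 := ℝ) k).map_average_le (continuous_pow k).continuousOn
      isClosed_Ici (Filter.Eventually.of_forall fun ω => hXpos ω) hXμ hXkμ
    simpa [average_eq_integral] using h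
  have hmean : ∫ ω, X ω ∂μ = deriv f sstar / c := by
    rw [hInt X, hd1]
    rw [show (fun ω => (b ω / c) * X ω) = fun ω => (X ω * b ω) / c by funext ω; ring,
      integral_div]
  have hlam_le : lam ≤ ∫ ω, X ω ∂μ := by
    rw [hmean, le_div_iff₀ hc]
    exact hderiv
  have hpow : lam ^ k ≤ (∫ ω, X ω ∂μ) ^ k := pow_le_pow_left₀ hlam.le hlam_le k
  have hXk_val : ∫ ω, X ω ^ k ∂μ = (∫ ω, X ω ^ k * b ω) / c := by
    rw [hInt (fun ω => X ω ^ k)]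
    rw [show (fun ω => (b ω / c) * X ω ^ k) = fun ω => (X ω ^ k * b ω) / c by funext ω; ring,
      integral_div]
  have hfinal : lam ^ k * c ≤ ∫ ω, X ω ^ k * b ω := by
    have := hpow.trans hJ
    rw [hXk_val, le_div_iff₀ hc] at this
    linarith
  rw [hIterEq]
  exact hfinal
end

section
/- Let μ > 0, λ ≥ max(μ,1), z(λ) the unique root in (0,1) of z = e^{-λ(1-z)} (take z(λ)=1 when λ ≤ 1) and define q(λ) = 1 - μ/λ + (μ/λ)e^{-λ(1-z(λ))} = 1 - (μ/λ)(1 - z(λ)). Then the stationary points of λ ↦ q(λ) on (1,∞) occur exactly where z(λ) = 1/(2λ). -/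
open Real

theorem stationary_points_of_q (μ : ℝ) (hμ : 0 < μ)
    (z : ℝ → ℝ)
    (hz : ∀ l : ℝ, 1 < l → z l ∈ Set.Ioo (0 : ℝ) 1 ∧ z l = Real.exp (-l * (1 - z l)))
    (q : ℝ → ℝ) (hq : ∀ l, q l = 1 - (μ / l) * (1 - z l)) :
    ∀ l : ℝ, 1 < l → max μ 1 ≤ l → (deriv q l = 0 ↔ z l = 1 / (2 * l)) := by
  intro l hl _
  have hl0 : (0:ℝ) < l := by linarith
  set h : ℝ → ℝ := fun x => Real.log x / (x - 1) with hh
  -- key inequality: (x-1)/x < log x on (0,1)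
  have hlog : ∀ x ∈ Set.Ioo (0:ℝ) 1, (x - 1) / x < Real.log x := by
    intro x hx
    have hx0 := hx.1
    have hx1 := hx.2
    have hne : x⁻¹ ≠ 1 := by
      rw [Ne, inv_eq_one]; exact ne_of_lt hx1
    have h1 : Real.log x⁻¹ < x⁻¹ - 1 :=
      Real.log_lt_sub_one_of_pos (by positivity) hne
    rw [Real.log_inv] at h1
    have h2 : (x - 1) / x = 1 - x⁻¹ := by field_simp
    linarith
  -- derivative of h
  have hderiv : ∀ x ∈ Set.Ioo (0:ℝ) 1,
      HasDerivAt h ((x⁻¹ * (x - 1) - Real.log x * 1) / (x - 1) ^ 2) x := by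
    intro x hx
    exact (Real.hasDerivAt_log hx.1.ne').div
      ((hasDerivAt_id x).sub_const 1) (sub_ne_zero.2 (ne_of_lt hx.2))
  have hderiv_neg : ∀ x ∈ Set.Ioo (0:ℝ) 1,
      (x⁻¹ * (x - 1) - Real.log x * 1) / (x - 1) ^ 2 < 0 := by
    intro x hx
    have h1 := hlog x hx
    have h2 : x⁻¹ * (x - 1) = (x - 1) / x := by
      field_simp
    apply div_neg_of_neg_of_pos
    · rw [h2]; linarith
    · have : x - 1 ≠ 0 := sub_ne_zero.2 (ne_of_lt hx.2)
      positivity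
  -- h strictly anti on (0,1)
  have hanti : StrictAntiOn h (Set.Ioo (0:ℝ) 1) := by
    apply strictAntiOn_of_deriv_neg (convex_Ioo _ _)
    · intro x hx
      exact ((hderiv x hx).continuousAt).continuousWithinAt
    · intro x hx
      rw [interior_Ioo] at hx
      rw [(hderiv x hx).deriv]
      exact hderiv_neg x hx
  have hmem : ∀ l' : ℝ, 1 < l' → z l' ∈ Set.Ioo (0:ℝ) 1 := fun l' h' => (hz l' h').1
  -- log of z
  have hlogz : ∀ l' : ℝ, 1 < l' → Real.log (z l') = -l' * (1 - z l') := by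
    intro l' hl'
    conv_lhs => rw [(hz l' hl').2]
    rw [Real.log_exp]
  -- h inverts z
  have hinv : ∀ l' : ℝ, 1 < l' → h (z l') = l' := by
    intro l' hl'
    have hm := hmem l' hl'
    have hne : z l' - 1 ≠ 0 := sub_ne_zero.2 (ne_of_lt hm.2)
    show Real.log (z l') / (z l' - 1) = l'
    rw [hlogz l' hl']
    field_simp
    ring
  -- l' * z l' < 1
  have hlt : ∀ l' : ℝ, 1 < l' → l' * z l' < 1 := by
    intro l' hl'
    have hm := hmem l' hl'
    have h1 : h (z l') < 1 / z l' := by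
      show Real.log (z l') / (z l' - 1) < 1 / z l'
      rw [div_lt_iff_of_neg (by linarith [hm.2] : z l' - 1 < 0)]
      have h2 : 1 / z l' * (z l' - 1) = (z l' - 1) / z l' := by ring
      rw [h2]
      exact hlog _ hm
    rw [hinv l' hl'] at h1
    rw [lt_div_iff₀ hm.1] at h1
    linarith
  -- z is strictly anti on (1, ∞)
  have hzanti : StrictAntiOn z (Set.Ioi (1:ℝ)) := by
    intro a ha b hb hab
    by_contra hcon
    push_neg at hcon
    rcases eq_or_lt_of_le hcon with heq | hlt'
    · have : h (z b) = h (z a) := by rw [heq]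
      rw [hinv a ha, hinv b hb] at this
      exact absurd this.symm (ne_of_lt hab)
    · have := hanti (hmem a ha) (hmem b hb) hlt'
      rw [hinv a ha, hinv b hb] at this
      exact absurd hab (not_lt.2 (le_of_lt this))
  -- z surjective onto (0,1)
  have hsurj : Set.Ioo (0:ℝ) 1 ⊆ z '' Set.Ioi 1 := by
    intro y hy
    have hy1 : 1 < h y := by
      show 1 < Real.log y / (y - 1)
      rw [lt_div_iff_of_neg (by linarith [hy.2] : y - 1 < 0)]
      have := Real.log_lt_sub_one_of_pos hy.1 (ne_of_lt hy.2)
      linarith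
    refine ⟨h y, hy1, ?_⟩
    have h1 : h (z (h y)) = h y := hinv (h y) hy1
    exact hanti.injOn (hmem (h y) hy1) hy h1
  -- continuity of z at l
  have hcont : ContinuousAt z l := by
    have hw : StrictMonoOn (fun x => -z x) (Set.Ioi (1:ℝ)) := by
      intro a ha b hb hab
      simpa using hzanti ha hb hab
    have him : (fun x => -z x) '' Set.Ioi 1 ∈ nhds (-(z l)) := by
      have hsub : Set.Ioo (-1:ℝ) 0 ⊆ (fun x => -z x) '' Set.Ioi 1 := by
        intro y hy
        have : -y ∈ Set.Ioo (0:ℝ) 1 := ⟨by linarith [hy.2], by linarith [hy.1]⟩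
        obtain ⟨a, ha, haz⟩ := hsurj this
        exact ⟨a, ha, by simp [haz]⟩
      apply Filter.mem_of_superset _ hsub
      apply isOpen_Ioo.mem_nhds
      have := hmem l hl
      exact ⟨by linarith [this.2], by linarith [this.1]⟩
    have hwc : ContinuousAt (fun x => -z x) l :=
      hw.continuousAt_of_image_mem_nhds (isOpen_Ioi.mem_nhds hl) him
    have := hwc.neg
    convert this using 1
    funext x
    simp
  -- derivative of z via inverse function
  set a : ℝ := z l with ha
  have hma : a ∈ Set.Ioo (0:ℝ) 1 := hmem l hl
  set d : ℝ := (a⁻¹ * (a - 1) - Real.log a * 1) / (a - 1) ^ 2 with hd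
  have hd_neg : d < 0 := hderiv_neg a hma
  have hd_ne : d ≠ 0 := ne_of_lt hd_neg
  have hhd : HasDerivAt h d a := hderiv a hma
  have hz' : HasDerivAt z d⁻¹ l := by
    apply HasDerivAt.of_local_left_inverse hcont hhd hd_ne
    exact Filter.eventually_of_mem (isOpen_Ioi.mem_nhds hl) (fun x hx => hinv x hx)
  -- derivative of q
  have hq' : q = fun x => 1 - (μ / x) * (1 - z x) := funext hq
  have h1 : HasDerivAt (fun x : ℝ => μ / x) (-(μ / l ^ 2)) l := by
    have := (hasDerivAt_inv hl0.ne').const_mul μ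
    simpa [div_eq_mul_inv, mul_neg] using this
  have h2 : HasDerivAt (fun x => 1 - z x) (0 - d⁻¹) l :=
    (hasDerivAt_const l 1).sub hz'
  have h3 : HasDerivAt (fun x => (μ / x) * (1 - z x))
      (-(μ / l ^ 2) * (1 - a) + (μ / l) * (0 - d⁻¹)) l := h1.mul h2
  have h4 : HasDerivAt q (0 - (-(μ / l ^ 2) * (1 - a) + (μ / l) * (0 - d⁻¹))) l := by
    rw [hq']
    exact (hasDerivAt_const l 1).sub h3
  -- simplify d
  have ha0 : (0:ℝ) < a := hma.1
  have ha1 : a < 1 := hma.2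
  have hane : a ≠ 0 := ha0.ne'
  have hane1 : a - 1 ≠ 0 := sub_ne_zero.2 (ne_of_lt ha1)
  have hla : l * a < 1 := hlt l hl
  have hla_ne : l * a - 1 ≠ 0 := ne_of_lt (by linarith)
  have h1a' : (1:ℝ) - a ≠ 0 := sub_ne_zero.2 (by linarith)
  have hdval : d = (l * a - 1) / (a * (1 - a)) := by
    rw [hd, hlogz l hl]
    field_simp
    ring
  have hdinv : d⁻¹ = a * (1 - a) / (l * a - 1) := by
    rw [hdval]
    rw [inv_div]
  -- final value of deriv q l
  have hkey : deriv q l = μ * (1 - a) * (2 * l * a - 1) / (l ^ 2 * (l * a - 1)) := by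
    rw [h4.deriv, hdinv]
    field_simp
    ring
  rw [hkey]
  have hden : l ^ 2 * (l * a - 1) ≠ 0 := by
    apply mul_ne_zero (by positivity) hla_ne
  constructor
  · intro h0
    rw [div_eq_zero_iff] at h0
    rcases h0 with h0 | h0
    · have hμne : μ ≠ 0 := hμ.ne'
      have h1a : (1:ℝ) - a ≠ 0 := sub_ne_zero.2 (ne_of_gt (by linarith : (1:ℝ) > a))
      rcases mul_eq_zero.1 h0 with h0 | h0
      · rcases mul_eq_zero.1 h0 with h0 | h0
        · exact absurd h0 hμne
        · exact absurd h0 h1a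
      · show a = 1 / (2 * l)
        field_simp
        linarith
    · exact absurd h0 hden
  · intro h0
    have h2a : 2 * l * a - 1 = 0 := by
      rw [ha] at h0 ⊢
      rw [h0]
      field_simp
      ring
    rw [h2a]
    simp
end

section
/- For any nonnegative integer-valued random variable D with E[D] = μ > 0 and any x ∈ [0,1], E[x^D] ≥ (1 − β) x^k + β x^{k+1}, where k = ⌊μ⌋ and β = μ − k. -/
open MeasureTheory ProbabilityTheory

lemma geom_upper (x : ℝ) (h0 : 0 ≤ x) (h1 : x ≤ 1) (m : ℕ) :
    1 - x ^ m ≤ m * (1 - x) := by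
  have hsum : ∑ i ∈ Finset.range m, x ^ i ≤ m := by
    calc ∑ i ∈ Finset.range m, x ^ i ≤ ∑ i ∈ Finset.range m, (1:ℝ) :=
          Finset.sum_le_sum fun i _ => pow_le_one₀ h0 h1
      _ = m := by simp
  have hid := geom_sum_mul x m
  nlinarith [sub_nonneg.mpr h1]

lemma geom_lower (x : ℝ) (h0 : 0 ≤ x) (h1 : x ≤ 1) (m : ℕ) :
    (m : ℝ) * x ^ m * (1 - x) ≤ 1 - x ^ m := by
  have hsum : (m : ℝ) * x ^ m ≤ ∑ i ∈ Finset.range m, x ^ i := by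
    calc (m : ℝ) * x ^ m = ∑ i ∈ Finset.range m, x ^ m := by simp [mul_comm]
      _ ≤ ∑ i ∈ Finset.range m, x ^ i :=
          Finset.sum_le_sum fun i hi =>
            pow_le_pow_of_le_one h0 h1 (Finset.mem_range.mp hi).le
  have hid := geom_sum_mul x m
  nlinarith [sub_nonneg.mpr h1]

lemma ptwise (x : ℝ) (h0 : 0 ≤ x) (h1 : x ≤ 1) (k n : ℕ) :
    x ^ k + ((n : ℝ) - (k : ℝ)) * (x ^ (k + 1) - x ^ k) ≤ x ^ n := by
  have hk : (0:ℝ) ≤ x ^ k := pow_nonneg h0 k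
  rcases le_or_gt k n with h | h
  · obtain ⟨m, rfl⟩ := Nat.exists_eq_add_of_le h
    have h2 := geom_upper x h0 h1 m
    have e1 : x ^ (k + m) = x ^ k * x ^ m := pow_add x k m
    have e2 : x ^ (k + 1) = x ^ k * x := pow_succ x k
    push_cast
    nlinarith
  · obtain ⟨m, rfl⟩ := Nat.exists_eq_add_of_le h.le
    have hn : (0:ℝ) ≤ x ^ n := pow_nonneg h0 n
    have h2 := geom_lower x h0 h1 m
    have e1 : x ^ (n + m) = x ^ n * x ^ m := pow_add x n m
    have e2 : x ^ (n + m + 1) = x ^ n * x ^ m * x := by ring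
    push_cast
    nlinarith [mul_le_mul_of_nonneg_left h2 hn]

theorem pgf_two_point_lower_bound
    {Ω : Type*} [MeasureSpace Ω] [IsProbabilityMeasure (ℙ : Measure Ω)]
    (D : Ω → ℕ) (hD : Measurable D)
    (hint : Integrable (fun ω => (D ω : ℝ)))
    (μ : ℝ) (hμ : μ = ∫ ω, (D ω : ℝ)) (hμpos : 0 < μ) :
    ∀ x ∈ Set.Icc (0 : ℝ) 1,
      ∫ ω, x ^ D ω ≥
        (1 - (μ - ⌊μ⌋₊)) * x ^ (⌊μ⌋₊) + (μ - ⌊μ⌋₊) * x ^ (⌊μ⌋₊ + 1) := by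
  rintro x ⟨h0, h1⟩
  set k := ⌊μ⌋₊ with hk
  -- lower function
  have hintg : Integrable (fun ω => x ^ k + ((D ω : ℝ) - (k : ℝ)) * (x ^ (k+1) - x ^ k)) := by
    exact (integrable_const _).add (((hint.sub (integrable_const _)).mul_const _))
  have hintf : Integrable (fun ω => x ^ D ω) := by
    refine (integrable_const (1:ℝ)).mono' ?_ ?_
    · exact ((measurable_const.pow hD).aestronglyMeasurable)
    · filter_upwards with ω
      rw [Real.norm_eq_abs, abs_of_nonneg (pow_nonneg h0 _)]
      exact pow_le_one₀ h0 h1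
  have hmono : ∫ ω, (x ^ k + ((D ω : ℝ) - (k : ℝ)) * (x ^ (k+1) - x ^ k)) ≤ ∫ ω, x ^ D ω := by
    refine integral_mono hintg hintf fun ω => ?_
    exact ptwise x h0 h1 k (D ω)
  have hcalc : ∫ ω, (x ^ k + ((D ω : ℝ) - (k : ℝ)) * (x ^ (k+1) - x ^ k))
      = x ^ k + (μ - (k : ℝ)) * (x ^ (k+1) - x ^ k) := by
    have h1' : Integrable (fun ω => ((D ω : ℝ) - (k : ℝ)) * (x ^ (k+1) - x ^ k)) := by
      exact (hint.sub (integrable_const _)).mul_const _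
    have h2' : Integrable (fun ω => ((D ω : ℝ) - (k : ℝ))) := by
      exact hint.sub (integrable_const _)
    rw [integral_add (integrable_const _) h1', integral_const, integral_mul_const,
      integral_sub hint (integrable_const _), integral_const]
    simp [← hμ]
  rw [hcalc] at hmono
  have : (1 - (μ - (k:ℝ))) * x ^ k + (μ - (k:ℝ)) * x ^ (k + 1)
      = x ^ k + (μ - (k : ℝ)) * (x ^ (k+1) - x ^ k) := by ring
  rw [ge_iff_le, this]
  exact hmono
end

section
/- Let f̄ and f̄† be as follows: f̄(s) = Σ_{m≥0} p_m s^m a probability generating function and f̄†(s) = (1−α)s^{k−1} + α s^k with k ≥ 1 and α ∈ [0,1]. If f̄(z) = f̄†(z) for some z ∈ (0,1) and f̄(1) = f̄†(1) = 1, then f̄(s) ≤ f̄†(s) for all s ∈ [z, 1]. -/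
theorem pgf_dominated_by_two_point (p : ℕ → ℝ) (hp : ∀ m, 0 ≤ p m)
    (hpsum : Summable p) (hp1 : ∑' m, p m = 1)
    (k : ℕ) (hk : 1 ≤ k) (α : ℝ) (hα : α ∈ Set.Icc (0 : ℝ) 1)
    (fbar fdag : ℝ → ℝ)
    (hfbar : ∀ s, fbar s = ∑' m, p m * s ^ m)
    (hfdag : ∀ s, fdag s = (1 - α) * s ^ (k - 1) + α * s ^ k)
    (z : ℝ) (hz : z ∈ Set.Ioo (0 : ℝ) 1) (heq : fbar z = fdag z) :
    ∀ s ∈ Set.Icc z 1, fbar s ≤ fdag s := by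
  obtain ⟨hz0, hz1⟩ := hz
  set e : ℕ → ℤ := fun m => (m : ℤ) + (1 - k) with he
  -- summability
  have hsum : ∀ t : ℝ, 0 < t → t ≤ 1 → Summable (fun m => p m * t ^ e m) := by
    intro t ht0 ht1
    have hne : t ≠ 0 := ne_of_gt ht0
    have h1 : Summable (fun m => p m * t ^ m) := by
      refine Summable.of_nonneg_of_le (fun m => ?_) (fun m => ?_) hpsum
      · exact mul_nonneg (hp m) (pow_nonneg ht0.le m)
      · have h2 : t ^ m ≤ 1 := pow_le_one₀ ht0.le ht1
        nlinarith [hp m, pow_nonneg ht0.le m]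
    have := h1.mul_right (t ^ ((1 : ℤ) - k))
    refine this.congr (fun m => ?_)
    rw [he]
    rw [zpow_add₀ hne, zpow_natCast, mul_assoc]
  -- value identity: tsum equals fbar t * t^(1-k)
  have hF : ∀ t : ℝ, t ≠ 0 → (∑' m, p m * t ^ e m) = fbar t * t ^ ((1 : ℤ) - k) := by
    intro t hne
    rw [hfbar, ← tsum_mul_right]
    congr 1 with m
    rw [he, zpow_add₀ hne, zpow_natCast, mul_assoc]
  intro s hs
  obtain ⟨hsz, hs1⟩ := hs
  have hs0 : 0 < s := lt_of_lt_of_le hz0 hsz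
  set a : ℝ := (1 - s) / (1 - z) with ha
  set b : ℝ := (s - z) / (1 - z) with hb
  have hz1' : (0:ℝ) < 1 - z := by linarith
  have ha0 : 0 ≤ a := by apply div_nonneg <;> linarith
  have hb0 : 0 ≤ b := by apply div_nonneg <;> linarith
  have hab : a + b = 1 := by rw [ha, hb, ← add_div]; rw [div_eq_one_iff_eq (ne_of_gt hz1')]; ring
  have hcomb : a * z + b * 1 = s := by
    rw [ha, hb, mul_one, div_mul_eq_mul_div, ← add_div, div_eq_iff (ne_of_gt hz1')]
    ring
  -- termwise convexity inequality
  have hterm : ∀ m, p m * s ^ e m ≤ a * (p m * z ^ e m) + b * (p m * 1 ^ e m) := by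
    intro m
    have hc := (convexOn_zpow (𝕜 := ℝ) (e m)).2 (Set.mem_Ioi.mpr hz0)
      (Set.mem_Ioi.mpr one_pos) ha0 hb0 hab
    rw [smul_eq_mul, smul_eq_mul, smul_eq_mul, smul_eq_mul, hcomb] at hc
    nlinarith [hp m]
  have hsum1 : Summable (fun m => p m * (1:ℝ) ^ e m) := hsum 1 one_pos le_rfl
  have hsumz : Summable (fun m => p m * z ^ e m) := hsum z hz0 hz1.le
  have hmain : (∑' m, p m * s ^ e m) ≤
      a * (∑' m, p m * z ^ e m) + b * (∑' m, p m * (1:ℝ) ^ e m) := by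
    rw [← tsum_mul_left, ← tsum_mul_left, ← Summable.tsum_add (hsumz.mul_left a) (hsum1.mul_left b)]
    exact Summable.tsum_le_tsum hterm (hsum s hs0 hs1)
      ((hsumz.mul_left a).add (hsum1.mul_left b))
  -- compute the right side
  have hF1 : (∑' m, p m * (1:ℝ) ^ e m) = 1 := by
    rw [hF 1 one_ne_zero, hfbar]
    simp [hp1]
  have hFz : (∑' m, p m * z ^ e m) = (1 - α) + α * z := by
    rw [hF z (ne_of_gt hz0), heq, hfdag]
    have hk1 : ((k - 1 : ℕ) : ℤ) = (k : ℤ) - 1 := by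
      omega
    have h1 : z ^ (k - 1) * z ^ ((1:ℤ) - k) = 1 := by
      rw [← zpow_natCast z (k-1), ← zpow_add₀ (ne_of_gt hz0), hk1]
      norm_num
    have h2 : z ^ k * z ^ ((1:ℤ) - k) = z := by
      rw [← zpow_natCast z k, ← zpow_add₀ (ne_of_gt hz0)]
      norm_num
    rw [add_mul, mul_assoc, mul_assoc, h1, h2, mul_one]
  rw [hF s (ne_of_gt hs0), hFz, hF1] at hmain
  -- conclude
  have hkey : fbar s * s ^ ((1:ℤ) - k) ≤ (1 - α) + α * s := by
    calc fbar s * s ^ ((1:ℤ) - k) ≤ a * ((1 - α) + α * z) + b * 1 := hmain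
    _ = (1 - α) * (a + b) + α * (a * z + b * 1) := by ring
    _ = (1 - α) + α * s := by rw [hab, hcomb]; ring
  have hspow : (0:ℝ) < s ^ ((k:ℤ) - 1) := zpow_pos hs0 _
  have := mul_le_mul_of_nonneg_right hkey hspow.le
  have hkk : s ^ ((1:ℤ) - k) * s ^ ((k:ℤ) - 1) = 1 := by
    rw [← zpow_add₀ (ne_of_gt hs0)]; norm_num
  rw [mul_assoc, hkk, mul_one] at this
  rw [hfdag]
  have hk1 : ((k - 1 : ℕ) : ℤ) = (k : ℤ) - 1 := by omega
  have e1 : s ^ (k - 1) = s ^ ((k:ℤ) - 1) := by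
    rw [← zpow_natCast s (k-1), hk1]
  have e2 : s ^ k = s * s ^ ((k:ℤ) - 1) := by
    rw [← zpow_natCast s k, show ((k:ℕ):ℤ) = 1 + ((k:ℤ) - 1) by ring,
      zpow_add₀ (ne_of_gt hs0), zpow_one]
    norm_num
  calc fbar s ≤ ((1 - α) + α * s) * s ^ ((k:ℤ) - 1) := this
  _ = (1 - α) * s ^ (k - 1) + α * s ^ k := by rw [e1, e2]; ring
end

section
/- Let D be a nonnegative integer-valued random variable with pgf f, size-biased shifted pgf f̄(s) = f'(s)/E[D], p ∈ (0,1], and let z ∈ [0,1) be a root of s = f̄(1 − p + ps). Suppose E[D] = c/p and f̄ is not identically the identity at 1 (P(D̄ = 1) < 1). Then 1 − f(1 − p + pz) ≤ c/2. -/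
open MeasureTheory ProbabilityTheory

theorem giant_at_most_half_mean_degree
    {Ω : Type*} [MeasureSpace Ω] [IsProbabilityMeasure (ℙ : Measure Ω)]
    (D : Ω → ℕ) (hD : Measurable D)
    (hint : Integrable (fun ω => (D ω : ℝ)))
    (c p : ℝ) (hc : 0 < c) (hp : p ∈ Set.Ioc (0 : ℝ) 1)
    (hmean : ∫ ω, (D ω : ℝ) = c / p)
    (f fbar : ℝ → ℝ)
    (hf : ∀ s, f s = ∫ ω, s ^ D ω)
    (hfbar : ∀ s, fbar s = deriv f s / (c / p))
    (hnotdeg : (ℙ {ω | D ω = 1}).toReal < c / p)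
    (z : ℝ) (hz : z ∈ Set.Ico (0 : ℝ) 1)
    (hfix : z = fbar (1 - p + p * z)) :
    1 - f (1 - p + p * z) ≤ c / 2 := by
  obtain ⟨hp0, hp1⟩ := hp
  obtain ⟨hz0, hz1⟩ := hz
  set w : ℝ := 1 - p + p * z with hw
  have hw0 : 0 ≤ w := by nlinarith
  have hw1 : w < 1 := by nlinarith
  have hcp : (0 : ℝ) < c / p := div_pos hc hp0
  -- measurability
  have measF : ∀ s : ℝ, AEStronglyMeasurable (fun ω => s ^ D ω) ℙ := fun s =>
    ((measurable_from_top (f := fun n : ℕ => s ^ n)).comp hD).aestronglyMeasurable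
  have measF' : ∀ s : ℝ, AEStronglyMeasurable (fun ω => (D ω : ℝ) * s ^ (D ω - 1)) ℙ := fun s =>
    ((measurable_from_top (f := fun n : ℕ => (n : ℝ) * s ^ (n - 1))).comp hD).aestronglyMeasurable
  -- integrability
  have intF : ∀ s : ℝ, |s| ≤ 1 → Integrable (fun ω => s ^ D ω) := by
    intro s hs
    refine (integrable_const (1 : ℝ)).mono' (measF s) (Filter.Eventually.of_forall fun ω => ?_)
    rw [Real.norm_eq_abs, abs_pow]
    exact pow_le_one₀ (abs_nonneg s) hs
  have intF' : ∀ s : ℝ, |s| ≤ 1 → Integrable (fun ω => (D ω : ℝ) * s ^ (D ω - 1)) := by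
    intro s hs
    refine hint.mono' (measF' s) (Filter.Eventually.of_forall fun ω => ?_)
    rw [Real.norm_eq_abs, abs_mul, abs_pow, Nat.abs_cast]
    calc (D ω : ℝ) * |s| ^ (D ω - 1) ≤ (D ω : ℝ) * 1 := by
          exact mul_le_mul_of_nonneg_left (pow_le_one₀ (abs_nonneg s) hs) (Nat.cast_nonneg _)
      _ = (D ω : ℝ) := mul_one _
  -- the derivative candidate
  set g : ℝ → ℝ := fun s => ∫ ω, (D ω : ℝ) * s ^ (D ω - 1) with hg
  have hfF : f = fun s => ∫ ω, s ^ D ω := funext hf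
  -- f has derivative g s on (-1, 1)
  have hderiv : ∀ s ∈ Set.Ioo (-1 : ℝ) 1, HasDerivAt f (g s) s := by
    intro s hs
    have hε : (0 : ℝ) < min (1 - s) (s + 1) := by
      rcases hs with ⟨h1, h2⟩; exact lt_min (by linarith) (by linarith)
    have habs : ∀ x ∈ Metric.ball s (min (1 - s) (s + 1)), |x| ≤ 1 := by
      intro x hx
      rw [Metric.mem_ball, Real.dist_eq] at hx
      have h1 := (abs_lt.mp hx).1
      have h2 := (abs_lt.mp hx).2
      have := min_le_left (1 - s) (s + 1)
      have := min_le_right (1 - s) (s + 1)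
      rw [abs_le]; constructor <;> linarith
    have key := hasDerivAt_integral_of_dominated_loc_of_deriv_le (μ := (ℙ : Measure Ω))
      (F := fun (x : ℝ) ω => x ^ D ω) (F' := fun (x : ℝ) ω => (D ω : ℝ) * x ^ (D ω - 1))
      (x₀ := s) (bound := fun ω => (D ω : ℝ)) (Metric.ball_mem_nhds s hε)
      (Filter.Eventually.of_forall fun x => measF x)
      (intF s (habs s (Metric.mem_ball_self hε)))
      (measF' s)
      (Filter.Eventually.of_forall fun ω x hx => by
        rw [Real.norm_eq_abs, abs_mul, abs_pow, Nat.abs_cast]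
        calc (D ω : ℝ) * |x| ^ (D ω - 1) ≤ (D ω : ℝ) * 1 :=
              mul_le_mul_of_nonneg_left (pow_le_one₀ (abs_nonneg x) (habs x hx)) (Nat.cast_nonneg _)
          _ = (D ω : ℝ) := mul_one _)
      hint
      (Filter.Eventually.of_forall fun ω x _ => hasDerivAt_pow (D ω) x)
    rw [hfF]
    exact key.2
  -- value of g at the fixed point
  have hgw : g w = (c / p) * z := by
    have h1 : HasDerivAt f (g w) w := hderiv w ⟨by linarith, hw1⟩
    have h2 : deriv f w = g w := h1.deriv
    have h3 : z = g w / (c / p) := by rw [hfix, hfbar, h2]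
    rw [eq_div_iff hcp.ne'] at h3
    rw [← h3]; ring
  -- value of g at 1
  have hg1 : g 1 = c / p := by
    have : (fun ω => (D ω : ℝ) * (1 : ℝ) ^ (D ω - 1)) = fun ω => (D ω : ℝ) := by
      funext ω; simp
    rw [hg]; simp only [this]; exact hmean
  -- monotonicity of g on [w, 1]
  have habs' : ∀ x ∈ Set.Icc w 1, |x| ≤ 1 := by
    intro x hx; rw [abs_le]; exact ⟨by linarith [hx.1], hx.2⟩
  have hmono : MonotoneOn g (Set.uIcc w 1) := by
    rw [Set.uIcc_of_le hw1.le]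
    intro a ha b hb hab
    refine integral_mono (intF' a (habs' a ha)) (intF' b (habs' b hb))
      (fun ω => mul_le_mul_of_nonneg_left ?_ (Nat.cast_nonneg _))
    exact pow_le_pow_left₀ (by linarith [ha.1]) hab _
  -- chord bound for the convex function g
  have hchord : ∀ s ∈ Set.Icc w 1, g s ≤ (c / p) * (1 - (1 - s) / p) := by
    intro s hs
    have h1w : (0 : ℝ) < 1 - w := by linarith
    set lam : ℝ := (1 - s) / (1 - w) with hlam
    set mu : ℝ := (s - w) / (1 - w) with hmu
    have hlam0 : 0 ≤ lam := div_nonneg (by linarith [hs.2]) h1w.le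
    have hmu0 : 0 ≤ mu := div_nonneg (by linarith [hs.1]) h1w.le
    have hsum : lam + mu = 1 := by
      rw [hlam, hmu, ← add_div, div_eq_one_iff_eq h1w.ne']
      ring
    have hcomb : lam * w + mu * 1 = s := by
      rw [hlam, hmu, div_mul_eq_mul_div, div_mul_eq_mul_div, ← add_div,
        div_eq_iff h1w.ne']
      ring
    have hconv : g s ≤ lam * g w + mu * g 1 := by
      have hpt : ∀ ω, (D ω : ℝ) * s ^ (D ω - 1) ≤
          lam * ((D ω : ℝ) * w ^ (D ω - 1)) + mu * ((D ω : ℝ) * (1 : ℝ) ^ (D ω - 1)) := by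
        intro ω
        have hcv := (convexOn_pow (𝕜 := ℝ) (D ω - 1)).2 (Set.mem_Ici.mpr hw0)
          (Set.mem_Ici.mpr zero_le_one) hlam0 hmu0 hsum
        simp only [smul_eq_mul] at hcv
        rw [hcomb] at hcv
        nlinarith [hcv, (Nat.cast_nonneg (D ω) : (0 : ℝ) ≤ (D ω : ℝ))]
      calc g s ≤ ∫ ω, (lam * ((D ω : ℝ) * w ^ (D ω - 1)) + mu * ((D ω : ℝ) * (1:ℝ) ^ (D ω - 1))) := by
            refine integral_mono (intF' s (habs' s hs)) ?_ hpt
            exact ((intF' w (habs' w ⟨le_refl w, hw1.le⟩)).const_mul lam).add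
              ((intF' 1 (by rw [abs_one])).const_mul mu)
        _ = lam * g w + mu * g 1 := by
            rw [integral_add (((intF' w (habs' w ⟨le_refl w, hw1.le⟩)).const_mul lam))
              ((intF' 1 (by rw [abs_one])).const_mul mu),
              integral_const_mul, integral_const_mul]
    rw [hgw, hg1] at hconv
    refine hconv.trans (le_of_eq ?_)
    rw [hlam, hmu, hw]
    have h1z : (1:ℝ) - (1 - p + p * z) = p * (1 - z) := by ring
    have hz' : (1:ℝ) - z ≠ 0 := by linarith
    rw [h1z]
    field_simp
    ring
  -- continuity of f on [w, 1]
  have hcont : ContinuousOn f (Set.Icc w 1) := by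
    intro x hx
    rw [hfF]
    refine tendsto_integral_filter_of_dominated_convergence (bound := fun _ => (1 : ℝ))
      (Filter.Eventually.of_forall fun s => measF s) ?_ (integrable_const 1) ?_
    · filter_upwards [eventually_mem_nhdsWithin] with s hs
      refine Filter.Eventually.of_forall fun ω => ?_
      rw [Real.norm_eq_abs, abs_pow]
      exact pow_le_one₀ (abs_nonneg s) (habs' s hs)
    · exact Filter.Eventually.of_forall fun ω =>
        ((continuous_pow (D ω)).tendsto x).mono_left nhdsWithin_le_nhds
  -- fundamental theorem of calculus
  have hFTC : ∫ s in w..1, g s = f 1 - f w :=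
    intervalIntegral.integral_eq_sub_of_hasDerivAt_of_le hw1.le hcont
      (fun x hx => hderiv x ⟨by linarith [hx.1], hx.2⟩) hmono.intervalIntegrable
  have hf1 : f 1 = 1 := by
    rw [hf]; simp
  -- compare with the linear upper bound
  have hlin : Continuous fun s : ℝ => (c / p) * (1 - (1 - s) / p) := by fun_prop
  have hIb : ∫ s in w..1, g s ≤ ∫ s in w..1, (c / p) * (1 - (1 - s) / p) :=
    intervalIntegral.integral_mono_on hw1.le hmono.intervalIntegrable
      (hlin.intervalIntegrable w 1) hchord
  -- compute the integral of the linear bound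
  have hA : ∀ s : ℝ, HasDerivAt (fun t : ℝ => (c / p) * ((1 - 1 / p) * t + t ^ 2 / (2 * p)))
      ((c / p) * (1 - (1 - s) / p)) s := by
    intro s
    have h2 := (((hasDerivAt_id s).const_mul (1 - 1 / p)).add
      ((hasDerivAt_pow 2 s).div_const (2 * p))).const_mul (c / p)
    simp only [id_eq] at h2
    refine h2.congr_deriv ?_
    push_cast
    ring
  have hRHS : ∫ s in w..1, (c / p) * (1 - (1 - s) / p) =
      (c / p) * ((1 - 1 / p) * 1 + 1 ^ 2 / (2 * p)) -
      (c / p) * ((1 - 1 / p) * w + w ^ 2 / (2 * p)) :=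
    intervalIntegral.integral_eq_sub_of_hasDerivAt (fun x _ => hA x)
      (hlin.intervalIntegrable w 1)
  have hval : (c / p) * ((1 - 1 / p) * 1 + 1 ^ 2 / (2 * p)) -
      (c / p) * ((1 - 1 / p) * w + w ^ 2 / (2 * p)) = c * (1 - z ^ 2) / 2 := by
    rw [hw]
    field_simp
    ring
  have hfinal : 1 - f w = ∫ s in w..1, g s := by rw [hFTC, hf1]
  rw [hfinal]
  calc ∫ s in w..1, g s ≤ ∫ s in w..1, (c / p) * (1 - (1 - s) / p) := hIb
    _ = c * (1 - z ^ 2) / 2 := by rw [hRHS, hval]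
    _ ≤ c / 2 := by nlinarith [sq_nonneg z]
end

section
/- Let X be a nonnegative random variable with mean μ ∈ (0, μ_c], where μ_c is the largest root of 2λ = e^{λ−1/2}, and let f(s) = E[e^{-X(1−s)}]. Let z_D be the smallest root of s = E[X e^{-X(1-s)}]/μ in [0,1], and q_D = f(z_D). Then q_D ≥ q*, where q* = 1 − (μ/μ_c)(1 − z*) and z* = 1/(2μ_c) is the root in (0,1) of z = e^{-μ_c(1−z)}. -/
open MeasureTheory ProbabilityTheory Real

lemma aux1 (x : ℝ) (hx : 0 ≤ x) : (2 - x) * Real.exp x ≤ 2 + x := by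
  have hmono : Monotone (fun y : ℝ => (2 + y) * Real.exp (-y) + y - 2) := by
    apply monotone_of_hasDerivAt_nonneg (f' := fun y => 1 - (1 + y) * Real.exp (-y))
    · intro y
      have h1 : HasDerivAt (fun y : ℝ => Real.exp (-y)) (-Real.exp (-y)) y := by
        exact ((Real.hasDerivAt_exp (-y)).comp y (hasDerivAt_neg y)).congr_deriv (by ring)
      have h2 : HasDerivAt (fun y : ℝ => (2 + y) * Real.exp (-y))
          (1 * Real.exp (-y) + (2 + y) * (-Real.exp (-y))) y := by
        simpa [Pi.mul_def, Pi.add_def] using ((hasDerivAt_const y (2:ℝ)).add (hasDerivAt_id y)).mul h1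
      have h3 := (h2.add (hasDerivAt_id y)).sub_const 2
      exact h3.congr_deriv (by ring)
    · intro y
      simp only [Pi.zero_apply]
      rw [sub_nonneg]
      have : (1 + y) ≤ Real.exp y := by linarith [Real.add_one_le_exp y]
      have he : Real.exp (-y) * Real.exp y = 1 := by
        rw [← Real.exp_add]; simp
      nlinarith [mul_le_mul_of_nonneg_right this (Real.exp_pos (-y)).le]
  have h0 := hmono hx
  simp at h0
  have he : Real.exp (-x) * Real.exp x = 1 := by rw [← Real.exp_add]; simp
  nlinarith [Real.exp_pos x, Real.exp_pos (-x)]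

lemma key_pointwise (L : ℝ) (hL : 0 < L) (y : ℝ) (hy : 0 ≤ y) :
    L^2 ≤ L^2 * Real.exp (-y) + (Real.exp L - 1 - L) * (y * Real.exp (-y))
      + (L - 1 + Real.exp (-L)) * y := by
  set C := Real.exp L - 1 - L with hCdef
  set D := L - 1 + Real.exp (-L) with hDdef
  set G : ℝ → ℝ := fun x => L^2 * Real.exp (-x) + C * (x * Real.exp (-x)) + D * x - L^2
    with hGdef
  set G1 : ℝ → ℝ := fun x => Real.exp (-x) * (C - L^2 - C * x) + D with hG1def
  set G2 : ℝ → ℝ := fun x => Real.exp (-x) * (L^2 - 2*C + C * x) with hG2def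
  have hexp : ∀ x : ℝ, HasDerivAt (fun s : ℝ => Real.exp (-s)) (-Real.exp (-x)) x := by
    intro x
    exact ((Real.hasDerivAt_exp (-x)).comp x (hasDerivAt_neg x)).congr_deriv (by ring)
  have hG : ∀ x, HasDerivAt G (G1 x) x := by
    intro x
    have h1 : HasDerivAt (fun s : ℝ => L^2 * Real.exp (-s)) (L^2 * (-Real.exp (-x))) x :=
      (hexp x).const_mul _
    have h2 : HasDerivAt (fun s : ℝ => s * Real.exp (-s))
        (1 * Real.exp (-x) + x * (-Real.exp (-x))) x := (hasDerivAt_id x).mul (hexp x)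
    have h3 := (((h1.add (h2.const_mul C)).add ((hasDerivAt_id x).const_mul D)).sub_const (L^2))
    rw [hGdef]
    refine h3.congr_deriv ?_
    simp only [hG1def]; ring
  have hG1 : ∀ x, HasDerivAt G1 (G2 x) x := by
    intro x
    have h1 : HasDerivAt (fun s : ℝ => C - L^2 - C * s) (-C) x := by
      simpa using (((hasDerivAt_id x).const_mul C).const_sub (C - L^2))
    have h2 := ((hexp x).mul h1).add_const D
    exact h2.congr_deriv (by simp only [hG2def]; ring)
  clear_value C D G G1 G2
  have hC : 0 < C := by
    have := Real.quadratic_le_exp_of_nonneg hL.le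
    rw [hCdef]; nlinarith
  have hD : 0 ≤ D := by
    have := Real.add_one_le_exp (-L)
    rw [hDdef]; linarith
  set y₁ : ℝ := 2 - L^2 / C with hy₁def
  clear_value y₁
  have hy₁L : y₁ ≤ L := by
    have h := aux1 L hL.le
    have h2 : (2 - L) * C ≤ L^2 := by rw [hCdef]; nlinarith
    have h3 : 2 - L ≤ L^2 / C := (le_div_iff₀ hC).mpr h2
    rw [hy₁def]; linarith
  have hGcont : Continuous G := continuous_iff_continuousAt.mpr fun x => (hG x).continuousAt
  have hG1cont : Continuous G1 := continuous_iff_continuousAt.mpr fun x => (hG1 x).continuousAt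
  have hCL2 : C * (L^2 / C) = L^2 := by field_simp
  have hG1mono : MonotoneOn G1 (Set.Ici y₁) := by
    apply monotoneOn_of_hasDerivWithinAt_nonneg (convex_Ici y₁) hG1cont.continuousOn
      (fun x _ => (hG1 x).hasDerivWithinAt)
    intro x hx
    rw [interior_Ici] at hx
    have hx' : y₁ < x := hx
    have h5 : C * (2 - L^2/C) = 2*C - L^2 := by field_simp
    have hb : 0 ≤ L^2 - 2*C + C * x := by
      have := mul_lt_mul_of_pos_left hx' hC
      rw [hy₁def] at this
      linarith [h5]
    rw [hG2def]
    exact mul_nonneg (Real.exp_pos _).le hb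
  have hEF : Real.exp (-L) * Real.exp L = 1 := by rw [← Real.exp_add]; simp
  have hG1L : G1 L = 0 := by
    simp only [hG1def, hCdef, hDdef]
    linear_combination (1 - L) * hEF
  have hGL : G L = 0 := by
    simp only [hGdef, hCdef, hDdef]
    linear_combination L * hEF
  have hG1nn : ∀ x, L ≤ x → 0 ≤ G1 x := by
    intro x hx
    have := hG1mono (Set.mem_Ici.mpr hy₁L) (Set.mem_Ici.mpr (hy₁L.trans hx)) hx
    rwa [hG1L] at this
  have hcase1 : ∀ x, L ≤ x → 0 ≤ G x := by
    intro x hx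
    have hmono : MonotoneOn G (Set.Ici L) := by
      apply monotoneOn_of_hasDerivWithinAt_nonneg (convex_Ici L) hGcont.continuousOn
        (fun s _ => (hG s).hasDerivWithinAt)
      intro s hs
      rw [interior_Ici] at hs
      exact hG1nn s (le_of_lt hs)
    have := hmono (Set.mem_Ici.mpr le_rfl) (Set.mem_Ici.mpr hx) hx
    rwa [hGL] at this
  have hcase2 : ∀ x, y₁ ≤ x → x ≤ L → 0 ≤ G x := by
    intro x h1x h2x
    have hanti : AntitoneOn G (Set.Icc y₁ L) := by
      apply antitoneOn_of_hasDerivWithinAt_nonpos (convex_Icc y₁ L) hGcont.continuousOn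
        (fun s _ => (hG s).hasDerivWithinAt)
      intro s hs
      rw [interior_Icc] at hs
      have := hG1mono (Set.mem_Ici.mpr hs.1.le) (Set.mem_Ici.mpr hy₁L) hs.2.le
      rwa [hG1L] at this
    have := hanti (Set.mem_Icc.mpr ⟨h1x, h2x⟩) (Set.mem_Icc.mpr ⟨hy₁L, le_rfl⟩) h2x
    rwa [hGL] at this
  have hGy : 0 ≤ G y := by
    rcases le_or_gt y₁ y with h | h
    · rcases le_or_gt L y with h' | h'
      · exact hcase1 y h'
      · exact hcase2 y h h'.le
    · have hy₁pos : 0 < y₁ := lt_of_le_of_lt hy h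
      have hGy₁ : 0 ≤ G y₁ := hcase2 y₁ le_rfl hy₁L
      have hG0 : G 0 = 0 := by simp [hGdef]
      have hconc : ConcaveOn ℝ (Set.Icc 0 y₁) G := by
        apply concaveOn_of_hasDerivWithinAt2_nonpos (convex_Icc 0 y₁) hGcont.continuousOn
          (fun s _ => (hG s).hasDerivWithinAt) (fun s _ => (hG1 s).hasDerivWithinAt)
        intro s hs
        rw [interior_Icc] at hs
        have h5 : C * (2 - L^2/C) = 2*C - L^2 := by field_simp
        have hb : L^2 - 2*C + C * s ≤ 0 := by
          have := mul_le_mul_of_nonneg_left hs.2.le hC.le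
          rw [hy₁def] at this
          linarith [h5]
        rw [hG2def]
        exact mul_nonpos_of_nonneg_of_nonpos (Real.exp_pos _).le hb
      have ha : 0 ≤ (y₁ - y)/y₁ := div_nonneg (by linarith) hy₁pos.le
      have hb : 0 ≤ y/y₁ := by positivity
      have hab : (y₁ - y)/y₁ + y/y₁ = 1 := by field_simp; ring
      have hkey := hconc.2 (Set.mem_Icc.mpr ⟨le_rfl, hy₁pos.le⟩)
        (Set.mem_Icc.mpr ⟨hy₁pos.le, le_rfl⟩) ha hb hab
      rw [smul_eq_mul, smul_eq_mul, smul_eq_mul, smul_eq_mul] at hkey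
      have hcomb : (y₁ - y)/y₁ * 0 + y/y₁ * y₁ = y := by field_simp; ring
      rw [hcomb, hG0] at hkey
      nlinarith [mul_nonneg hb hGy₁]
  simp only [hGdef] at hGy
  linarith

lemma gmax (Ls : ℝ) (hLs : 1/2 ≤ Ls) (hroot : Real.exp Ls = 2*Ls + 1)
    (L : ℝ) (hL : 0 < L) :
    (1 - Real.exp (-L))^2 / L ≤ (1 - Real.exp (-Ls))^2 / Ls := by
  have hLs0 : 0 < Ls := by linarith
  set g : ℝ → ℝ := fun x => (1 - Real.exp (-x))^2 / x with hgdef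
  have hexp : ∀ x : ℝ, HasDerivAt (fun s : ℝ => Real.exp (-s)) (-Real.exp (-x)) x := by
    intro x
    exact ((Real.hasDerivAt_exp (-x)).comp x (hasDerivAt_neg x)).congr_deriv (by ring)
  set g' : ℝ → ℝ := fun x =>
    ((1 - Real.exp (-x)) * Real.exp (-x) * (2*x + 1 - Real.exp x)) / x^2 with hg'def
  have hg : ∀ x : ℝ, x ≠ 0 → HasDerivAt g (g' x) x := by
    intro x hx
    have hnum : HasDerivAt (fun s : ℝ => (1 - Real.exp (-s))^2)
        (2 * (1 - Real.exp (-x)) * Real.exp (-x)) x := by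
      have h1 : HasDerivAt (fun s : ℝ => 1 - Real.exp (-s)) (Real.exp (-x)) x := by
        simpa using (hexp x).const_sub 1
      simpa [Pi.pow_def] using (h1.pow 2)
    have h2 := hnum.div (hasDerivAt_id x) hx
    have hEF : Real.exp (-x) * Real.exp x = 1 := by rw [← Real.exp_add]; simp
    refine h2.congr_deriv ?_
    rw [hg'def]
    simp only [id_eq]
    have hnum_eq : (1 - Real.exp (-x)) * Real.exp (-x) * (2*x + 1 - Real.exp x)
        = 2 * (1 - Real.exp (-x)) * Real.exp (-x) * x - (1 - Real.exp (-x))^2 * 1 := by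
      linear_combination (Real.exp (-x) - 1) * hEF
    rw [hnum_eq]
  clear_value g g'
  rcases le_or_gt L Ls with hcase | hcase
  · -- monotone on [L, Ls]
    have hmono : MonotoneOn g (Set.Icc L Ls) := by
      apply monotoneOn_of_hasDerivWithinAt_nonneg (convex_Icc L Ls)
        (fun x hx => ((hg x (ne_of_gt (lt_of_lt_of_le hL hx.1))).continuousAt).continuousWithinAt)
        (fun x hx => (hg x (by rw [interior_Icc] at hx; exact ne_of_gt (lt_trans hL hx.1))).hasDerivWithinAt)
      intro x hx
      rw [interior_Icc] at hx
      have hx0 : 0 < x := hL.trans hx.1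
      have hchord : Real.exp x ≤ 2*x + 1 := by
        have ha' : (0:ℝ) ≤ 1 - x/Ls := by
          have : x/Ls ≤ 1 := (div_le_one hLs0).mpr hx.2.le
          linarith
        have hb' : (0:ℝ) ≤ x/Ls := div_nonneg hx0.le hLs0.le
        have hab' : (1 - x/Ls) + x/Ls = 1 := by ring
        have hcvx := convexOn_exp.2 (Set.mem_univ (0:ℝ)) (Set.mem_univ Ls) ha' hb' hab'
        have hc : (1 - x/Ls) • (0:ℝ) + (x/Ls) • Ls = x := by
          rw [smul_eq_mul, smul_eq_mul]; field_simp; ring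
        rw [hc, smul_eq_mul, smul_eq_mul, Real.exp_zero, hroot] at hcvx
        have hd2 : x/Ls * (2*Ls+1) = 2*x + x/Ls := by field_simp
        linarith [hcvx, hd2]
      rw [hg'def]
      have h1 : 0 ≤ 1 - Real.exp (-x) := by
        have : Real.exp (-x) ≤ 1 := Real.exp_le_one_iff.mpr (by linarith)
        linarith
      have h2 : (0:ℝ) < x^2 := by positivity
      apply div_nonneg _ h2.le
      apply mul_nonneg (mul_nonneg h1 (Real.exp_pos _).le)
      linarith
    have := hmono (Set.mem_Icc.mpr ⟨le_rfl, hcase⟩) (Set.mem_Icc.mpr ⟨hcase, le_rfl⟩) hcase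
    simpa [hgdef] using this
  · -- antitone on [Ls, L]
    have hanti : AntitoneOn g (Set.Icc Ls L) := by
      apply antitoneOn_of_hasDerivWithinAt_nonpos (convex_Icc Ls L)
        (fun x hx => ((hg x (ne_of_gt (lt_of_lt_of_le hLs0 hx.1))).continuousAt).continuousWithinAt)
        (fun x hx => (hg x (by rw [interior_Icc] at hx; exact ne_of_gt (lt_trans hLs0 hx.1))).hasDerivWithinAt)
      intro x hx
      rw [interior_Icc] at hx
      have hx0 : 0 < x := hLs0.trans hx.1
      have habove : 2*x + 1 ≤ Real.exp x := by
        have hpsi : MonotoneOn (fun s : ℝ => Real.exp s - (2*s + 1)) (Set.Ici Ls) := by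
          apply monotoneOn_of_hasDerivWithinAt_nonneg (convex_Ici Ls)
            (by fun_prop)
            (f' := fun s => Real.exp s - 2)
            (fun s _ => by
              simpa [Pi.sub_def] using ((Real.hasDerivAt_exp s).sub
                (((hasDerivAt_id s).const_mul (2:ℝ)).add_const 1)).hasDerivWithinAt)
          intro s hs
          rw [interior_Ici] at hs
          have : Real.exp Ls ≤ Real.exp s := Real.exp_le_exp.mpr (le_of_lt hs)
          rw [hroot] at this
          linarith
        have h9 : Real.exp Ls - (2*Ls + 1) ≤ Real.exp x - (2*x + 1) :=
          hpsi (Set.mem_Ici.mpr le_rfl) (Set.mem_Ici.mpr hx.1.le) hx.1.le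
        rw [hroot] at h9
        linarith
      rw [hg'def]
      have h1 : 0 ≤ 1 - Real.exp (-x) := by
        have : Real.exp (-x) ≤ 1 := Real.exp_le_one_iff.mpr (by linarith)
        linarith
      have h2 : (0:ℝ) < x^2 := by positivity
      apply div_nonpos_of_nonpos_of_nonneg _ h2.le
      apply mul_nonpos_of_nonneg_of_nonpos (mul_nonneg h1 (Real.exp_pos _).le)
      linarith
    have := hanti (Set.mem_Icc.mpr ⟨le_rfl, hcase.le⟩) (Set.mem_Icc.mpr ⟨hcase.le, le_rfl⟩) hcase.le
    simpa [hgdef] using this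

theorem poissonian_giant_max_small_mean
    {Ω : Type*} [MeasureSpace Ω] [IsProbabilityMeasure (ℙ : Measure Ω)]
    (X : Ω → ℝ) (hXmeas : Measurable X) (hXpos : ∀ ω, 0 ≤ X ω)
    (hXint : Integrable X)
    (μc : ℝ) (hμc_root : 2 * μc = Real.exp (μc - 1 / 2))
    (hμc_max : ∀ x : ℝ, 2 * x = Real.exp (x - 1 / 2) → x ≤ μc)
    (μ : ℝ) (hμ : μ = ∫ ω, X ω) (hμpos : 0 < μ) (hμle : μ ≤ μc)
    (f fbar : ℝ → ℝ)
    (hf : ∀ s, f s = ∫ ω, Real.exp (-(X ω) * (1 - s)))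
    (hfbar : ∀ s, fbar s = (∫ ω, X ω * Real.exp (-(X ω) * (1 - s))) / μ)
    (zD : ℝ) (hzD : zD ∈ Set.Icc (0 : ℝ) 1) (hzfix : zD = fbar zD)
    (hzmin : ∀ s ∈ Set.Icc (0 : ℝ) 1, s = fbar s → zD ≤ s) :
    f zD ≥ 1 - (μ / μc) * (1 - 1 / (2 * μc)) := by
  have hμc1 : 1 < μc := by
    have hcont : ContinuousOn (fun x : ℝ => Real.exp (x - 1/2) - 2*x) (Set.Icc 1 3) := by
      fun_prop
    have hφ1 : Real.exp ((1:ℝ) - 1/2) - 2*1 < 0 := by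
      have he : Real.exp (1/2:ℝ) * Real.exp (1/2:ℝ) = Real.exp 1 := by
        rw [← Real.exp_add]; norm_num
      have h1 := Real.exp_one_lt_d9
      norm_num
      nlinarith [Real.exp_pos (1/2:ℝ)]
    have hφ3 : 0 < Real.exp ((3:ℝ) - 1/2) - 2*3 := by
      have hq := Real.quadratic_le_exp_of_nonneg (show (0:ℝ) ≤ 5/2 by norm_num)
      norm_num
      nlinarith [hq]
    have h0mem : (0:ℝ) ∈ Set.Icc (Real.exp ((1:ℝ) - 1/2) - 2*1) (Real.exp ((3:ℝ) - 1/2) - 2*3) :=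
      ⟨hφ1.le, hφ3.le⟩
    obtain ⟨x₀, hx₀mem, hx₀⟩ := intermediate_value_Icc (by norm_num : (1:ℝ) ≤ 3) hcont h0mem
    have hroot₀ : 2*x₀ = Real.exp (x₀ - 1/2) := by
      simp only at hx₀; linarith
    have hle := hμc_max x₀ hroot₀
    have hx₀gt1 : 1 < x₀ := by
      rcases eq_or_lt_of_le hx₀mem.1 with h | h
      · exfalso; rw [← h] at hx₀; simp only at hx₀; linarith
      · exact h
    linarith
  have hμcpos : 0 < μc := by linarith
  have hLs : 1/2 ≤ μc - 1/2 := by linarith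
  have hrootLs : Real.exp (μc - 1/2) = 2*(μc - 1/2) + 1 := by rw [← hμc_root]; ring
  have hexpLs : Real.exp (-(μc - 1/2)) = 1/(2*μc) := by
    rw [Real.exp_neg, ← hμc_root, one_div]
  have hμcne : μc ≠ 0 := by intro h; rw [h] at hμc1; norm_num at hμc1
  have hQ : (1 - Real.exp (-(μc - 1/2)))^2 / (μc - 1/2) = (1/μc) * (1 - 1/(2*μc)) := by
    have hne : μc - 1/2 ≠ 0 := by intro h; nlinarith
    rw [hexpLs, div_eq_iff hne]
    field_simp
  obtain ⟨hz0, hz1⟩ := hzD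
  have hμne : μ ≠ 0 := ne_of_gt hμpos
  have hfixv : (∫ ω, X ω * Real.exp (-(X ω) * (1 - zD))) = μ * zD := by
    have h := hzfix
    rw [hfbar, eq_div_iff hμne] at h
    linarith
  have hmeas_e : Measurable fun ω => Real.exp (-(X ω) * (1 - zD)) :=
    Real.measurable_exp.comp (hXmeas.neg.mul_const _)
  have hbound_e : ∀ ω, Real.exp (-(X ω) * (1 - zD)) ≤ 1 := fun ω =>
    Real.exp_le_one_iff.mpr (by nlinarith [hXpos ω])
  have hint_e : Integrable fun ω => Real.exp (-(X ω) * (1 - zD)) := by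
    apply Integrable.mono' (integrable_const (1:ℝ)) hmeas_e.aestronglyMeasurable
    filter_upwards with ω
    rw [Real.norm_eq_abs, abs_of_pos (Real.exp_pos _)]
    exact hbound_e ω
  have hint_xe : Integrable fun ω => X ω * Real.exp (-(X ω) * (1 - zD)) := by
    apply hXint.mono (hXmeas.mul hmeas_e).aestronglyMeasurable
    filter_upwards with ω
    rw [Real.norm_eq_abs, Real.norm_eq_abs, Pi.mul_apply, abs_mul, abs_of_nonneg (hXpos ω),
      abs_of_pos (Real.exp_pos _)]
    calc X ω * Real.exp (-(X ω) * (1 - zD)) ≤ X ω * 1 :=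
          mul_le_mul_of_nonneg_left (hbound_e ω) (hXpos ω)
      _ = X ω := mul_one _
  rcases eq_or_lt_of_le hz1 with hz1eq | hz1lt
  · rw [hf]
    have hone : (∫ ω, Real.exp (-(X ω) * (1 - zD))) = 1 := by
      rw [hz1eq]
      simp
    rw [hone]
    have h2 : 1/(2*μc) ≤ 1 := by rw [div_le_one (by linarith)]; linarith
    nlinarith [div_nonneg hμpos.le hμcpos.le]
  · have hzpos : 0 < zD := by
      rcases eq_or_lt_of_le hz0 with h0 | h0
      · exfalso
        have hfix0 : (∫ ω, X ω * Real.exp (-(X ω) * (1 - zD))) = 0 := by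
          rw [hfixv, ← h0, mul_zero]
        have hnn : (0:Ω → ℝ) ≤ fun ω => X ω * Real.exp (-(X ω) * (1 - zD)) := fun ω =>
          mul_nonneg (hXpos ω) (Real.exp_pos _).le
        have hae := (integral_eq_zero_iff_of_nonneg hnn hint_xe).mp hfix0
        have hXae : X =ᵐ[ℙ] 0 := by
          filter_upwards [hae] with ω hω
          simp only [Pi.zero_apply] at hω ⊢
          have := Real.exp_pos (-(X ω) * (1 - zD))
          rcases mul_eq_zero.mp hω with h | h
          · exact h
          · exact absurd h (ne_of_gt this)
        have : μ = 0 := by rw [hμ, integral_congr_ae hXae]; simp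
        exact hμne this
      · exact h0
    have hlogneg : Real.log zD < 0 := Real.log_neg hzpos hz1lt
    set L := -Real.log zD with hLdef
    have hL : 0 < L := by rw [hLdef]; linarith
    have hzL : Real.exp (-L) = zD := by rw [hLdef, neg_neg, Real.exp_log hzpos]
    have hptwise : ∀ ω, (fun _ => L^2) ω ≤ (fun ω => L^2 * Real.exp (-(X ω) * (1 - zD))
        + ((Real.exp L - 1 - L) * (1 - zD)) * (X ω * Real.exp (-(X ω) * (1 - zD)))
        + ((L - 1 + Real.exp (-L)) * (1 - zD)) * X ω) ω := by
      intro ω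
      have hy : 0 ≤ (1 - zD) * X ω := mul_nonneg (by linarith) (hXpos ω)
      have hk := key_pointwise L hL ((1 - zD) * X ω) hy
      have harg : -((1 - zD) * X ω) = -(X ω) * (1 - zD) := by ring
      rw [harg] at hk
      simp only
      nlinarith [hk]
    have hint1 : Integrable (fun ω => L^2 * Real.exp (-(X ω) * (1 - zD))
        + ((Real.exp L - 1 - L) * (1 - zD)) * (X ω * Real.exp (-(X ω) * (1 - zD)))) :=
      (hint_e.const_mul _).add (hint_xe.const_mul _)
    have hint_rhs : Integrable (fun ω => L^2 * Real.exp (-(X ω) * (1 - zD))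
        + ((Real.exp L - 1 - L) * (1 - zD)) * (X ω * Real.exp (-(X ω) * (1 - zD)))
        + ((L - 1 + Real.exp (-L)) * (1 - zD)) * X ω) :=
      hint1.add (hXint.const_mul _)
    have hmono := integral_mono (integrable_const (L^2)) hint_rhs hptwise
    rw [integral_const, integral_add hint1 (hXint.const_mul _),
      integral_add (hint_e.const_mul _) (hint_xe.const_mul _),
      integral_const_mul, integral_const_mul, integral_const_mul, hfixv, ← hμ, ← hf] at hmono
    simp only [probReal_univ, one_smul] at hmono
    -- hmono : L^2 ≤ L^2 * f zD + (exp L - 1 - L)*(1-zD)*(μ*zD) + (L-1+exp(-L))*(1-zD)*μ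
    have hEzD : Real.exp L * zD = 1 := by rw [← hzL, ← Real.exp_add]; simp
    have hstep : L^2 - μ * (L * (1 - zD)^2) ≤ L^2 * f zD := by
      have he : (Real.exp L - 1 - L) * (1 - zD) * (μ * zD)
          + (L - 1 + Real.exp (-L)) * (1 - zD) * μ = μ * (L * (1 - zD)^2) := by
        rw [← hzL]
        rw [← hzL] at hEzD
        linear_combination (μ * (1 - Real.exp (-L))) * hEzD
      linarith [hmono, he]
    have hgm := gmax (μc - 1/2) hLs hrootLs L hL
    rw [hzL, hQ] at hgm
    have h1 : 1 - μ * ((1 - zD)^2 / L) ≤ f zD := by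
      have hLne : L ≠ 0 := ne_of_gt hL
      rw [← sub_nonneg]
      have expand : f zD - (1 - μ * ((1 - zD)^2 / L))
          = (L^2 * f zD - (L^2 - μ * (L * (1 - zD)^2))) / L^2 := by
        field_simp
      rw [expand]
      exact div_nonneg (by linarith) (sq_nonneg L)
    have h2 : μ * ((1 - zD)^2 / L) ≤ μ * ((1/μc) * (1 - 1/(2*μc))) :=
      mul_le_mul_of_nonneg_left hgm hμpos.le
    have h3 : μ * ((1/μc) * (1 - 1/(2*μc))) = (μ/μc) * (1 - 1/(2*μc)) := by ring
    linarith
end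

section
/- Let X be a nonnegative random variable with mean μ ≥ μ_c, where μ_c is the largest root of 2λ = e^{λ−1/2}. Let f(s) = E[e^{-X(1−s)}], z_D the smallest root in [0,1] of s = E[X e^{-X(1−s)}]/μ, and q_D = f(z_D). Then q_D ≥ q(μ), where q(μ) = e^{-μ(1−z(μ))} and z(μ) is the smallest root in [0,1] of z = e^{-μ(1−z)}. -/
open MeasureTheory ProbabilityTheory Real
set_option maxHeartbeats 1000000

lemma pg_sinh_le (x : ℝ) (hx : 0 ≤ x) : Real.sinh x ≤ x * Real.cosh x := by
  have hder : ∀ u : ℝ, HasDerivAt (fun v : ℝ => v * Real.cosh v - Real.sinh v)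
      (u * Real.sinh u) u := by
    intro u
    have h1 : HasDerivAt (fun v : ℝ => v * Real.cosh v)
        (1 * Real.cosh u + u * Real.sinh u) u :=
      (hasDerivAt_id u).mul (Real.hasDerivAt_cosh u)
    have h2 := h1.sub (Real.hasDerivAt_sinh u)
    exact h2.congr_deriv (by ring)
  have hmono : MonotoneOn (fun v : ℝ => v * Real.cosh v - Real.sinh v) (Set.Ici 0) := by
    apply monotoneOn_of_deriv_nonneg (convex_Ici 0)
    · exact (Continuous.sub (continuous_id.mul Real.continuous_cosh) Real.continuous_sinh).continuousOn
    · exact fun u _ => (hder u).differentiableAt.differentiableWithinAt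
    · intro u hu
      rw [interior_Ici, Set.mem_Ioi] at hu
      rw [(hder u).deriv]
      exact mul_nonneg hu.le (Real.sinh_nonneg_iff.2 hu.le)
  have := hmono (Set.self_mem_Ici) (Set.mem_Ici.2 hx) hx
  simpa using this

lemma pg_cert {L z : ℝ} (hL : 0 < L) (hz : Real.exp (-L) = z) {y : ℝ} (hy : 0 ≤ y) :
    1 + (1 - z - L) / L ^ 2 * y
      + (z * L - 1 + z) / (z * L ^ 2) * y * Real.exp (-y) ≤ Real.exp (-y) := by
  have hzpos : 0 < z := hz ▸ Real.exp_pos _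
  have hz1 : z < 1 := by rw [← hz]; exact Real.exp_lt_one_iff.2 (by linarith)
  set β := (1 - z - L) / L ^ 2 with hβdef
  set γ := (z * L - 1 + z) / (z * L ^ 2) with hγdef
  set w := Real.exp (-(L/2)) with hwdef
  have hwpos : 0 < w := Real.exp_pos _
  have hw : w * w = z := by rw [hwdef, ← Real.exp_add, ← hz]; ring_nf
  have hw1 : w * Real.exp (L/2) = 1 := by rw [hwdef, ← Real.exp_add]; simp
  -- f2 : z * L^2 ≤ (1-z)^2
  have hsinh1 : L/2 ≤ Real.sinh (L/2) := Real.self_le_sinh_iff.2 (by linarith)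
  have hsinh_eq : Real.sinh (L/2) = (Real.exp (L/2) - w)/2 := by rw [Real.sinh_eq]
  have hwL : w * L ≤ 1 - z := by
    have h1 : L ≤ Real.exp (L/2) - w := by rw [hsinh_eq] at hsinh1; linarith
    have h2 := mul_le_mul_of_nonneg_left h1 hwpos.le
    nlinarith [hw1, hw]
  have f2 : z * L^2 ≤ (1-z)^2 := by
    have h3 : (0:ℝ) ≤ w * L := mul_nonneg hwpos.le hL.le
    nlinarith [mul_le_mul hwL hwL h3 (by nlinarith : (0:ℝ) ≤ 1 - z), hw]
  -- f3 : 2*(1-z) ≤ L*(1+z)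
  have hcosh_eq : Real.cosh (L/2) = (Real.exp (L/2) + w)/2 := by rw [Real.cosh_eq]
  have f3 : 2*(1-z) ≤ L*(1+z) := by
    have h := pg_sinh_le (L/2) (by linarith)
    rw [hsinh_eq, hcosh_eq] at h
    have h4 := mul_le_mul_of_nonneg_left h (show (0:ℝ) ≤ 4*w by positivity)
    have e1 : 4*w*((Real.exp (L/2) - w)/2) = 2*(1-z) := by linear_combination 2*hw1 - 2*hw
    have e2 : 4*w*(L/2*((Real.exp (L/2) + w)/2)) = L*(1+z) := by
      linear_combination L*hw1 + L*hw
    linarith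
  have hβneg : β < 0 := by
    have h5 : 1 - L < z := by
      have := Real.add_one_lt_exp (x := -L) (by linarith : (-L) ≠ 0)
      rw [hz] at this; linarith
    rw [hβdef]
    apply div_neg_of_neg_of_pos (by linarith) (by positivity)
  have heL : Real.exp L = z⁻¹ := by rw [← hz, ← Real.exp_neg, neg_neg]
  set φ : ℝ → ℝ := fun u => 1 - γ*u - (1 + β*u)*Real.exp u with hφdef
  set φd : ℝ → ℝ := fun u => -γ - (1 + β + β*u)*Real.exp u with hφddef
  have hderφ : ∀ u : ℝ, HasDerivAt φ (φd u) u := by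
    intro u
    have hlin : HasDerivAt (fun v : ℝ => 1 + β*v) β u := by
      simpa using ((hasDerivAt_id u).const_mul β).const_add 1
    have hmul := hlin.mul (Real.hasDerivAt_exp u)
    have hg : HasDerivAt (fun v : ℝ => 1 - γ*v) (-γ) u := by
      simpa using ((hasDerivAt_id u).const_mul γ).const_sub 1
    have := hg.sub hmul
    exact this.congr_deriv (by simp only [hφddef]; ring)
  have hderφd : ∀ u : ℝ, HasDerivAt φd (-(1 + 2*β + β*u)*Real.exp u) u := by
    intro u
    have hlin : HasDerivAt (fun v : ℝ => 1 + β + β*v) β u := by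
      simpa using ((hasDerivAt_id u).const_mul β).const_add (1 + β)
    have hmul := hlin.mul (Real.hasDerivAt_exp u)
    have := hmul.const_sub (-γ)
    exact this.congr_deriv (by ring)
  have hcontφ : Continuous φ := by
    apply Continuous.sub (by continuity)
    exact (continuous_const.add (continuous_const.mul continuous_id)).mul Real.continuous_exp
  have hφ0 : φ 0 = 0 := by simp [hφdef]
  have hφL : φ L = 0 := by
    simp only [hφdef, hβdef, hγdef, heL]
    field_simp
    ring
  have hφdL : φd L = 0 := by
    simp only [hφddef, hβdef, hγdef, heL]
    field_simp
    ring
  set y0 : ℝ := -(1 + 2*β)/β with hy0def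
  have hβy0 : β * y0 = -(1 + 2*β) := by
    rw [hy0def]; field_simp
    rw [mul_div_cancel_left₀ _ hβneg.ne]
  have hy0sum : 1 + 2*β + β*L ≤ 0 := by
    have he : 1 + 2*β + β*L = (2*(1-z) - L*(1+z))/L^2 := by
      rw [hβdef]; field_simp; ring
    rw [he]
    apply div_nonpos_of_nonpos_of_nonneg (by linarith) (by positivity)
  have hy0L : y0 ≤ L := by
    rw [hy0def, div_le_iff_of_neg hβneg]
    linarith
  have hs1 : ∀ u : ℝ, y0 ≤ u → 1 + 2*β + β*u ≤ 0 := by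
    intro u hu
    nlinarith [mul_nonneg (sub_nonneg.2 hu) (neg_nonneg.2 hβneg.le), hβy0]
  have hs2 : ∀ u : ℝ, u ≤ y0 → 0 ≤ 1 + 2*β + β*u := by
    intro u hu
    nlinarith [mul_nonneg (sub_nonneg.2 hu) (neg_nonneg.2 hβneg.le), hβy0]
  have hcontφd : Continuous φd := by
    apply Continuous.sub continuous_const
    exact ((continuous_const.add (continuous_const.mul continuous_id)).mul Real.continuous_exp)
  have hmonoφd : MonotoneOn φd (Set.Ici y0) := by
    apply monotoneOn_of_deriv_nonneg (convex_Ici _) hcontφd.continuousOn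
      (fun u _ => (hderφd u).differentiableAt.differentiableWithinAt)
    intro u hu
    rw [interior_Ici, Set.mem_Ioi] at hu
    rw [(hderφd u).deriv]
    exact mul_nonneg (neg_nonneg.2 (hs1 u hu.le)) (Real.exp_pos u).le
  have hantiφd : AntitoneOn φd (Set.Iic y0) := by
    apply antitoneOn_of_deriv_nonpos (convex_Iic _) hcontφd.continuousOn
      (fun u _ => (hderφd u).differentiableAt.differentiableWithinAt)
    intro u hu
    rw [interior_Iic, Set.mem_Iio] at hu
    rw [(hderφd u).deriv]
    apply mul_nonpos_of_nonpos_of_nonneg _ (Real.exp_pos u).le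
    have := hs2 u hu.le
    linarith
  have hφdIcc : ∀ u ∈ Set.Icc y0 L, φd u ≤ 0 := by
    intro u hu
    have := hmonoφd (Set.mem_Ici.2 hu.1) (Set.mem_Ici.2 hy0L) hu.2
    rw [hφdL] at this
    exact this
  have hφy : 0 ≤ φ y := by
    rcases le_or_gt L y with hcase | hcase
    · have hm : MonotoneOn φ (Set.Ici L) := by
        apply monotoneOn_of_deriv_nonneg (convex_Ici _) hcontφ.continuousOn
          (fun u _ => (hderφ u).differentiableAt.differentiableWithinAt)
        intro u hu
        rw [interior_Ici, Set.mem_Ioi] at hu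
        rw [(hderφ u).deriv]
        have := hmonoφd (Set.mem_Ici.2 hy0L) (Set.mem_Ici.2 (hy0L.trans hu.le)) hu.le
        rw [hφdL] at this
        exact this
      have := hm (Set.mem_Ici.2 le_rfl) (Set.mem_Ici.2 hcase) hcase
      rw [hφL] at this
      exact this
    · rcases le_or_gt y0 y with hy0y | hy0y
      · have ha : AntitoneOn φ (Set.Icc y L) := by
          apply antitoneOn_of_deriv_nonpos (convex_Icc _ _) hcontφ.continuousOn
            (fun u _ => (hderφ u).differentiableAt.differentiableWithinAt)
          intro u hu
          rw [interior_Icc, Set.mem_Ioo] at hu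
          rw [(hderφ u).deriv]
          exact hφdIcc u ⟨hy0y.trans hu.1.le, hu.2.le⟩
        have := ha (Set.mem_Icc.2 ⟨le_rfl, hcase.le⟩) (Set.mem_Icc.2 ⟨hcase.le, le_rfl⟩) hcase.le
        rw [hφL] at this
        exact this
      · rcases le_or_gt 0 (φd y) with hsign | hsign
        · have hm : MonotoneOn φ (Set.Icc 0 y) := by
            apply monotoneOn_of_deriv_nonneg (convex_Icc _ _) hcontφ.continuousOn
              (fun u _ => (hderφ u).differentiableAt.differentiableWithinAt)
            intro u hu
            rw [interior_Icc, Set.mem_Ioo] at hu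
            rw [(hderφ u).deriv]
            have := hantiφd (Set.mem_Iic.2 ((hu.2.le.trans hy0y.le))) (Set.mem_Iic.2 hy0y.le) hu.2.le
            linarith
          have := hm (Set.mem_Icc.2 ⟨le_rfl, hy⟩) (Set.mem_Icc.2 ⟨hy, le_rfl⟩) hy
          rw [hφ0] at this
          exact this
        · have ha : AntitoneOn φ (Set.Icc y L) := by
            apply antitoneOn_of_deriv_nonpos (convex_Icc _ _) hcontφ.continuousOn
              (fun u _ => (hderφ u).differentiableAt.differentiableWithinAt)
            intro u hu
            rw [interior_Icc, Set.mem_Ioo] at hu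
            rcases le_or_gt u y0 with h2 | h2
            · rw [(hderφ u).deriv]
              have := hantiφd (Set.mem_Iic.2 hy0y.le) (Set.mem_Iic.2 h2) hu.1.le
              linarith
            · rw [(hderφ u).deriv]
              exact hφdIcc u ⟨h2.le, hu.2.le⟩
          have := ha (Set.mem_Icc.2 ⟨le_rfl, hcase.le⟩) (Set.mem_Icc.2 ⟨hcase.le, le_rfl⟩) hcase.le
          rw [hφL] at this
          exact this
  have hEy : Real.exp (-y) * Real.exp y = 1 := by rw [← Real.exp_add]; simp
  have h2 : Real.exp (-y) * φ y = Real.exp (-y) - γ*y*Real.exp (-y) - (1 + β*y) := by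
    simp only [hφdef]
    linear_combination (-(1 + β*y)) * hEy
  have h3 := mul_nonneg (Real.exp_pos (-y)).le hφy
  rw [h2] at h3
  linarith
lemma pg_Bfun (x : ℝ) (hx : 1 ≤ x) :
    0 ≤ (7/10) * Real.log x - 17/20 + x⁻¹ - (3/20) * (x^2)⁻¹ := by
  set F : ℝ → ℝ := fun v => (7/10) * Real.log v - 17/20 + v⁻¹ - (3/20) * (v^2)⁻¹ with hF
  have hder : ∀ u : ℝ, 0 < u → HasDerivAt F
      ((7/10) * u⁻¹ + (-(u^2)⁻¹) - (3/20) * (-(2*u) / (u^2)^2)) u := by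
    intro u hu
    have h1 : HasDerivAt (fun v : ℝ => (7/10) * Real.log v) ((7/10) * u⁻¹) u :=
      (Real.hasDerivAt_log hu.ne').const_mul _
    have h2 : HasDerivAt (fun v : ℝ => v⁻¹) (-(u^2)⁻¹) u := by
      simpa using hasDerivAt_inv hu.ne'
    have h3 : HasDerivAt (fun v : ℝ => (v^2)⁻¹) (-(2*u) / (u^2)^2) u := by
      have hp : HasDerivAt (fun v : ℝ => v^2) (2*u) u := by
        simpa using hasDerivAt_pow 2 u
      exact hp.inv (pow_ne_zero 2 hu.ne')
    exact ((h1.sub_const _).add h2).sub (h3.const_mul _)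
  have hmono : MonotoneOn F (Set.Ici 1) := by
    apply monotoneOn_of_deriv_nonneg (convex_Ici 1)
    · intro v hv
      simp only [Set.mem_Ici] at hv
      have hv0 : v ≠ 0 := by intro h; rw [h] at hv; linarith
      have hc1 : ContinuousAt (fun v : ℝ => (7/10) * Real.log v) v :=
        (Real.continuousAt_log hv0).const_mul _
      have hc2 : ContinuousAt (fun v : ℝ => v⁻¹) v := continuousAt_id.inv₀ hv0
      have hc3 : ContinuousAt (fun v : ℝ => (3/20) * (v^2)⁻¹) v :=
        (((continuous_pow 2).continuousAt).inv₀ (pow_ne_zero 2 hv0)).const_mul _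
      exact (((hc1.sub continuousAt_const).add hc2).sub hc3).continuousWithinAt
    · intro u hu
      rw [interior_Ici, Set.mem_Ioi] at hu
      exact (hder u (by linarith)).differentiableAt.differentiableWithinAt
    · intro u hu
      rw [interior_Ici, Set.mem_Ioi] at hu
      have hu0 : (0:ℝ) < u := by linarith
      rw [(hder u hu0).deriv]
      have key : (7/10) * u⁻¹ + (-(u^2)⁻¹) - (3/20) * (-(2*u) / (u^2)^2)
          = ((7/10)*u^2 - u + 3/10) / u^3 := by
        field_simp
        ring
      rw [key]
      apply div_nonneg _ (by positivity)
      nlinarith [mul_nonneg (by linarith : (0:ℝ) ≤ u - 1) (by linarith : (0:ℝ) ≤ u - 3/7)]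
  have h1 := hmono (Set.self_mem_Ici) (Set.mem_Ici.2 hx) hx
  have hF1 : F 1 = 0 := by norm_num [hF]
  rw [hF1] at h1
  exact h1
lemma pg_final {μ zμ v u : ℝ} (hμ : (1.7:ℝ) ≤ μ) (hzμpos : 0 < zμ) (hK1 : 2*μ*zμ ≤ 1)
    (hK2 : zμ ≤ 0.3) (hv0 : 0 < v) (hv1 : v ≤ 1) (hA : 1 - v ≤ u)
    (hB : 0 ≤ (7/10)*u - 17/20 + v - (3/20)*(v*v)) :
    μ*(1 - zμ*v)^2 ≤ (1-zμ)*(μ*(1-zμ) + u) := by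
  have hFnn : 0 ≤ (1-v)*(2 - zμ*v - zμ) := by
    apply mul_nonneg (by linarith)
    nlinarith [mul_le_of_le_one_right hzμpos.le hv1]
  have step1 : μ*zμ*((1-v)*(2 - zμ*v - zμ)) ≤ (1/2)*((1-v)*(2-zμ*v-zμ)) := by
    nlinarith [mul_nonneg (by linarith : (0:ℝ) ≤ 1/2 - μ*zμ) hFnn]
  have step2 : (1/2)*((1-v)*(2-zμ*v-zμ)) ≤ (1-zμ)*u := by
    rcases le_or_gt (u - (1 - v*v)/2) 0 with hC | hC
    · have h3 : zμ*(u - (1-v*v)/2) ≤ 0 := mul_nonpos_of_nonneg_of_nonpos hzμpos.le hC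
      nlinarith [h3, hA]
    · have h3 : zμ*(u - (1-v*v)/2) ≤ 0.3*(u - (1-v*v)/2) := by
        nlinarith [mul_nonneg (by linarith : (0:ℝ) ≤ 0.3 - zμ) hC.le]
      nlinarith [hB, h3]
  nlinarith [step1, step2]

theorem poissonian_giant_max_large_mean
    {Ω : Type*} [MeasureSpace Ω] [IsProbabilityMeasure (ℙ : Measure Ω)]
    (X : Ω → ℝ) (hXmeas : Measurable X) (hXpos : ∀ ω, 0 ≤ X ω)
    (hXint : Integrable X)
    (μc : ℝ) (hμc_root : 2 * μc = Real.exp (μc - 1 / 2))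
    (hμc_max : ∀ x : ℝ, 2 * x = Real.exp (x - 1 / 2) → x ≤ μc)
    (μ : ℝ) (hμ : μ = ∫ ω, X ω) (hμge : μc ≤ μ)
    (f fbar : ℝ → ℝ)
    (hf : ∀ s, f s = ∫ ω, Real.exp (-(X ω) * (1 - s)))
    (hfbar : ∀ s, fbar s = (∫ ω, X ω * Real.exp (-(X ω) * (1 - s))) / μ)
    (zD : ℝ) (hzD : zD ∈ Set.Icc (0 : ℝ) 1) (hzfix : zD = fbar zD)
    (hzmin : ∀ s ∈ Set.Icc (0 : ℝ) 1, s = fbar s → zD ≤ s)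
    (zμ : ℝ) (hzμ : zμ ∈ Set.Icc (0 : ℝ) 1)
    (hzμfix : zμ = Real.exp (-μ * (1 - zμ)))
    (hzμmin : ∀ s ∈ Set.Icc (0 : ℝ) 1, s = Real.exp (-μ * (1 - s)) → zμ ≤ s) :
    f zD ≥ Real.exp (-μ * (1 - zμ)) := by
  -- ## Numeric bound : 1.7 ≤ μc
  have h12 : Real.exp (1.2:ℝ) < 3.4 := by
    have h6 : Real.exp (6:ℝ) < 2.7182818286^6 := by
      calc Real.exp (6:ℝ) = (Real.exp 1)^6 := by
            rw [← Real.exp_nat_mul]; norm_num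
        _ < 2.7182818286^6 := by
            gcongr
            · exact Real.exp_one_lt_d9
    by_contra hcon
    push_neg at hcon
    have h5 : Real.exp (1.2:ℝ)^5 = Real.exp 6 := by
      rw [← Real.exp_nat_mul]; norm_num
    have := pow_le_pow_left₀ (by norm_num : (0:ℝ) ≤ 3.4) hcon 5
    rw [h5] at this
    nlinarith [this, h6]
  have h15 : (4:ℝ) < Real.exp 1.5 := by
    have he1 := Real.exp_one_gt_d9
    have h05 : (1.5:ℝ) ≤ Real.exp 0.5 := by
      have := Real.add_one_le_exp (0.5:ℝ); linarith
    have heq : Real.exp (1.5:ℝ) = Real.exp 1 * Real.exp 0.5 := by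
      rw [← Real.exp_add]; norm_num
    nlinarith [Real.exp_pos (0.5:ℝ)]
  have hμc17 : (1.7:ℝ) ≤ μc := by
    have hcont : ContinuousOn (fun x : ℝ => Real.exp (x - 1/2) - 2*x) (Set.Icc 1.7 2) := by
      fun_prop
    have hIVT := intermediate_value_Icc (by norm_num : (1.7:ℝ) ≤ 2) hcont
    have hmem : (0:ℝ) ∈ Set.Icc (Real.exp ((1.7:ℝ) - 1/2) - 2*1.7) (Real.exp ((2:ℝ) - 1/2) - 2*2) := by
      constructor
      · have he : (1.7:ℝ) - 1/2 = 1.2 := by norm_num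
        rw [he]; linarith
      · have he : (2:ℝ) - 1/2 = 1.5 := by norm_num
        rw [he]; linarith
    obtain ⟨c, hcmem, hc0⟩ := hIVT hmem
    have hcfix : 2*c = Real.exp (c - 1/2) := by
      simp only at hc0
      linarith [hc0]
    exact le_trans hcmem.1 (hμc_max c hcfix)
  have hμ17 : (1.7:ℝ) ≤ μ := le_trans hμc17 hμge
  have hμpos : (0:ℝ) < μ := by linarith
  -- ## 2μ ≤ exp(μ - 1/2)
  have hP2 : 2*μ ≤ Real.exp (μ - 1/2) := by
    have he : Real.exp (μ - 1/2) = Real.exp (μc - 1/2) * Real.exp (μ - μc) := by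
      rw [← Real.exp_add]; ring_nf
    have h1 := Real.add_one_le_exp (μ - μc)
    rw [he, ← hμc_root]
    nlinarith [hμc17, hμge]
  -- ## zμ facts
  have hzμpos : 0 < zμ := by rw [hzμfix]; exact Real.exp_pos _
  have hzμle : zμ ≤ 1/(2*μ) := by
    have h2μ : (0:ℝ) < 2*μ := by linarith
    have hs0le1 : 1/(2*μ) ≤ 1 := by
      rw [div_le_one h2μ]; linarith
    have hds0 : Real.exp (-μ*(1 - 1/(2*μ))) - 1/(2*μ) ≤ 0 := by
      have he : -μ*(1 - 1/(2*μ)) = -(μ - 1/2) := by field_simp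
      rw [he, Real.exp_neg]
      have hinv : (Real.exp (μ - 1/2))⁻¹ ≤ (2*μ)⁻¹ := by
        apply inv_anti₀ h2μ hP2
      have : (2*μ)⁻¹ = 1/(2*μ) := by rw [one_div]
      linarith
    have hcont2 : ContinuousOn (fun s : ℝ => Real.exp (-μ*(1-s)) - s) (Set.Icc 0 (1/(2*μ))) := by
      fun_prop
    have hIVT2 := intermediate_value_Icc' (by positivity : (0:ℝ) ≤ 1/(2*μ)) hcont2
    have hmem2 : (0:ℝ) ∈ Set.Icc (Real.exp (-μ*(1-1/(2*μ))) - 1/(2*μ)) (Real.exp (-μ*(1-0)) - 0) := by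
      constructor
      · exact hds0
      · simp only [sub_zero]
        positivity
    obtain ⟨s, hsmem, hs0⟩ := hIVT2 hmem2
    have hsfix : s = Real.exp (-μ*(1-s)) := by
      simp only at hs0
      linarith [hs0]
    have := hzμmin s ⟨hsmem.1, le_trans hsmem.2 hs0le1⟩ hsfix
    linarith [hsmem.2]
  have h2μ : (0:ℝ) < 2*μ := by linarith
  have hK1 : 2*μ*zμ ≤ 1 := by
    have := (le_div_iff₀ h2μ).1 hzμle
    nlinarith [this]
  have hK2 : zμ ≤ 0.3 := by
    have h3 : 1/(2*μ) ≤ (0.3:ℝ) := by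
      rw [div_le_iff₀ h2μ]; linarith
    linarith
  -- ## integrability
  have hzD0 : 0 ≤ zD := hzD.1
  have hzD1 : zD ≤ 1 := hzD.2
  have hmeas1 : Measurable (fun ω => Real.exp (-(X ω)*(1-zD))) :=
    ((hXmeas.neg.mul_const _).exp)
  have hexple1 : ∀ ω, Real.exp (-(X ω)*(1-zD)) ≤ 1 := by
    intro ω
    calc Real.exp (-(X ω)*(1-zD)) ≤ Real.exp 0 := by
          apply Real.exp_le_exp.2
          nlinarith [hXpos ω]
      _ = 1 := Real.exp_zero
  have hInt1 : Integrable (fun ω => Real.exp (-(X ω)*(1-zD))) := by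
    apply (integrable_const (1:ℝ)).mono' hmeas1.aestronglyMeasurable
    filter_upwards with ω
    rw [Real.norm_eq_abs, abs_of_nonneg (Real.exp_pos _).le]
    exact hexple1 ω
  have hInt2 : Integrable (fun ω => X ω * Real.exp (-(X ω)*(1-zD))) := by
    apply hXint.mono' (hXmeas.mul hmeas1).aestronglyMeasurable
    filter_upwards with ω
    rw [Real.norm_eq_abs, Pi.mul_apply, abs_of_nonneg (mul_nonneg (hXpos ω) (Real.exp_pos _).le)]
    exact mul_le_of_le_one_right (hXpos ω) (hexple1 ω)
  have hIX : ∫ ω, X ω = μ := hμ.symm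
  have hIXe : ∫ ω, X ω * Real.exp (-(X ω)*(1-zD)) = zD * μ := by
    have h := hzfix
    rw [hfbar, eq_div_iff hμpos.ne'] at h
    linarith [h]
  rw [ge_iff_le, ← hzμfix, hf]
  by_cases hcase : zμ ≤ zD
  · -- Jensen case
    set E : ℝ := Real.exp (-μ*(1-zD)) with hEdef
    have hEpos : 0 < E := Real.exp_pos _
    have hpt : ∀ ω, E * (1 + μ*(1-zD)) - E*(1-zD) * X ω ≤ Real.exp (-(X ω)*(1-zD)) := by
      intro ω
      have h1 := Real.add_one_le_exp (μ*(1-zD) - (1-zD)*X ω)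
      have h2 := mul_le_mul_of_nonneg_left h1 hEpos.le
      have h3 : E * Real.exp (μ*(1-zD) - (1-zD)*X ω) = Real.exp (-(X ω)*(1-zD)) := by
        rw [hEdef, ← Real.exp_add]
        congr 1
        ring
      nlinarith [h2, h3]
    have hIntL : Integrable (fun ω => E * (1 + μ*(1-zD)) - E*(1-zD) * X ω) :=
      (integrable_const _).sub (hXint.const_mul _)
    have hle := integral_mono hIntL hInt1 hpt
    rw [integral_sub (integrable_const _) (hXint.const_mul _), integral_const,
      integral_const_mul, hIX] at hle
    simp only [measure_univ, probReal_univ, ENNReal.toReal_one, smul_eq_mul, one_mul] at hle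
    have hle2 : E ≤ ∫ ω, Real.exp (-(X ω)*(1-zD)) := by
      have : E * (1 + μ*(1-zD)) - E*(1-zD)*μ = E := by ring
      linarith [hle, this.symm.le, this.le]
    have hmono2 : zμ ≤ E := by
      rw [hzμfix, hEdef]
      apply Real.exp_le_exp.2
      nlinarith [hcase, hμpos]
    linarith
  · -- certificate case
    push_neg at hcase
    have hzDpos : 0 < zD := by
      rcases lt_or_eq_of_le hzD0 with h | h
      · exact h
      · exfalso
        have hI0 : ∫ ω, X ω * Real.exp (-(X ω)*(1-zD)) = 0 := by
          rw [hIXe, ← h]; ring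
        have hae := (integral_eq_zero_iff_of_nonneg
          (fun ω => mul_nonneg (hXpos ω) (Real.exp_pos _).le) hInt2).1 hI0
        have hXae : X =ᵐ[(ℙ : Measure Ω)] 0 := by
          filter_upwards [hae] with ω hω
          simp only [Pi.zero_apply] at hω ⊢
          rcases mul_eq_zero.1 hω with h2 | h2
          · exact h2
          · exact absurd h2 (Real.exp_ne_zero _)
        have hμ0 : μ = 0 := by
          rw [hμ, integral_congr_ae hXae]
          simp
        linarith
    have hzDlt1 : zD < 1 := lt_of_lt_of_le hcase (by linarith)
    set L := -Real.log zD with hLdef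
    have hlogneg : Real.log zD < 0 := Real.log_neg hzDpos hzDlt1
    have hL : 0 < L := by rw [hLdef]; linarith
    have hzL : Real.exp (-L) = zD := by rw [hLdef, neg_neg, Real.exp_log hzDpos]
    set β : ℝ := (1 - zD - L)/L^2 with hβdef
    set γ : ℝ := (zD*L - 1 + zD)/(zD*L^2) with hγdef
    have hpt : ∀ ω, 1 + β*(1-zD)*X ω + γ*(1-zD)*(X ω * Real.exp (-(X ω)*(1-zD)))
        ≤ Real.exp (-(X ω)*(1-zD)) := by
      intro ω
      have h := pg_cert hL hzL (y := (1-zD)*X ω) (mul_nonneg (by linarith) (hXpos ω))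
      have he : Real.exp (-((1-zD)*X ω)) = Real.exp (-(X ω)*(1-zD)) := by
        congr 1; ring
      rw [he] at h
      have heq : 1 + β*(1-zD)*X ω + γ*(1-zD)*(X ω * Real.exp (-(X ω)*(1-zD)))
          = 1 + β * ((1-zD)*X ω) + γ * ((1-zD)*X ω) * Real.exp (-(X ω)*(1-zD)) := by
        ring
      rw [heq]
      exact h
    have hIntL2 : Integrable (fun ω => 1 + β*(1-zD)*X ω
        + γ*(1-zD)*(X ω * Real.exp (-(X ω)*(1-zD)))) :=
      ((integrable_const 1).add (hXint.const_mul _)).add (hInt2.const_mul _)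
    have hle := integral_mono hIntL2 hInt1 hpt
    have hintA : Integrable (fun ω => 1 + β*(1-zD)*X ω) (ℙ : Measure Ω) :=
      (integrable_const 1).add (hXint.const_mul _)
    have hintB : Integrable (fun ω => γ*(1-zD)*(X ω * Real.exp (-(X ω)*(1-zD))))
        (ℙ : Measure Ω) := hInt2.const_mul _
    have hIcalc : (∫ ω, (1 + β*(1-zD)*X ω + γ*(1-zD)*(X ω * Real.exp (-(X ω)*(1-zD)))))
        = 1 + β*(1-zD)*μ + γ*(1-zD)*(zD*μ) := by
      rw [integral_add hintA hintB, integral_add (integrable_const 1) (hXint.const_mul _),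
        integral_const, integral_const_mul, integral_const_mul, hIX, hIXe]
      simp [measure_univ]
    rw [hIcalc] at hle
    -- hle : 1 + β*(1-zD)*μ + γ*(1-zD)*(zD*μ) ≤ ∫ ...
    -- ## final arithmetic : zμ ≤ 1 - μ(1-zD)²/L
    set x : ℝ := zμ/zD with hxdef
    have hxpos : 0 < x := div_pos hzμpos hzDpos
    have hx1 : 1 ≤ x := by
      rw [hxdef, le_div_iff₀ hzDpos, one_mul]
      exact hcase.le
    set v : ℝ := x⁻¹ with hvdef
    have hvpos : 0 < v := inv_pos.2 hxpos
    have hv1 : v ≤ 1 := by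
      rw [hvdef]
      exact inv_le_one_of_one_le₀ hx1
    have hzv : zμ * v = zD := by
      rw [hvdef, hxdef]
      field_simp
    set u : ℝ := Real.log x with hudef
    have hA : 1 - v ≤ u := by
      have h := Real.log_le_sub_one_of_pos (inv_pos.2 hxpos)
      rw [Real.log_inv] at h
      rw [hudef, hvdef]
      linarith
    have hB : 0 ≤ (7/10)*u - 17/20 + v - (3/20)*(v*v) := by
      have h := pg_Bfun x hx1
      have h2 : (x^2)⁻¹ = v*v := by
        rw [hvdef]; rw [sq]
        rw [mul_inv]
      rw [h2] at h
      rw [hudef, hvdef]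
      linarith [h]
    have hLeq : L = μ*(1-zμ) + u := by
      have hlogzμ : Real.log zμ = -μ*(1-zμ) := by
        conv_lhs => rw [hzμfix]
        rw [Real.log_exp]
      have hlogx : u = Real.log zμ - Real.log zD := by
        rw [hudef, hxdef, Real.log_div hzμpos.ne' hzDpos.ne']
      rw [hLdef]
      rw [hlogx, hlogzμ]
      ring
    -- key inequality
    have hkey : μ*(1-zD)^2 ≤ (1-zμ)*L := by
      rw [hLeq, ← hzv]
      exact pg_final hμ17 hzμpos hK1 hK2 hvpos hv1 hA hB
    have hbg : β + γ*zD = (zD - 1)/L := by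
      rw [hβdef, hγdef]
      field_simp
      ring
    have hval : zμ ≤ 1 + β*(1-zD)*μ + γ*(1-zD)*(zD*μ) := by
      have h4 : β*(1-zD)*μ + γ*(1-zD)*(zD*μ) = μ*(1-zD)*(β + γ*zD) := by ring
      have h5 : μ*(1-zD)*(β + γ*zD) = -(μ*(1-zD)^2/L) := by
        rw [hbg]
        field_simp
        ring
      have h6 : μ*(1-zD)^2/L ≤ 1 - zμ := by
        rw [div_le_iff₀ hL]
        linarith [hkey]
      linarith [h4, h5, h6]
    linarith
end
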